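/- arXiv:0910.5630 — 4 statements merged into one kernel-verified Lean document; each statement's English description precedes it below -/
import Mathlib

section
/- Let r ≥ 1 and m ≥ 1 be integers, let V be a complex vector space of dimension rm, and let w ∈ ⋀^r V. Then T_w = N + (w^⊥)^m, where N := {(t_1,…,t_m) ∈ (⋀^r V)^m : (−1)^r t_i + t_j = 0 for all 1 ≤ i < j ≤ m}. Consequently, if m ≥ 3, then T_w = (w^⊥)^m when r is even, and T_w = Δ + (w^⊥)^m when r is odd, where Δ := {(t,…,t) : t ∈ ⋀^r V} is the diagonal subspace. -/
open Module ExteriorAlgebra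

/-- The linear map `(t_1, …, t_m) ↦ w ∧ t_j + t_i ∧ w`. -/
noncomputable def pairMap {V : Type*} [AddCommGroup V] [Module ℂ V] {r : ℕ} (m : ℕ)
    (w : ⋀[ℂ]^r V) (i j : Fin m) :
    (Fin m → (⋀[ℂ]^r V : Submodule ℂ (ExteriorAlgebra ℂ V))) →ₗ[ℂ] ExteriorAlgebra ℂ V :=
  ((LinearMap.mulLeft ℂ (w : ExteriorAlgebra ℂ V)).comp
      ((⋀[ℂ]^r V).subtype.comp (LinearMap.proj j))) +
    ((LinearMap.mulRight ℂ (w : ExteriorAlgebra ℂ V)).comp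
      ((⋀[ℂ]^r V).subtype.comp (LinearMap.proj i)))

/-- `T_w = {(t_1,…,t_m) | w ∧ t_j + t_i ∧ w = 0 for all i < j}`. -/
noncomputable def Tw {V : Type*} [AddCommGroup V] [Module ℂ V] {r : ℕ} (m : ℕ)
    (w : ⋀[ℂ]^r V) :
    Submodule ℂ (Fin m → (⋀[ℂ]^r V : Submodule ℂ (ExteriorAlgebra ℂ V))) :=
  ⨅ (i : Fin m) (j : Fin m) (_ : i < j), LinearMap.ker (pairMap m w i j)

/-- `w^⊥ = {t ∈ ⋀^r V | w ∧ t = 0 in ⋀^(2r) V}`. -/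
noncomputable def wPerp {V : Type*} [AddCommGroup V] [Module ℂ V] {r : ℕ}
    (w : ⋀[ℂ]^r V) : Submodule ℂ (⋀[ℂ]^r V : Submodule ℂ (ExteriorAlgebra ℂ V)) :=
  LinearMap.ker ((LinearMap.mulLeft ℂ (w : ExteriorAlgebra ℂ V)).comp (⋀[ℂ]^r V).subtype)

/-- `N = {(t_1,…,t_m) | (-1)^r t_i + t_j = 0 for all i < j}`. -/
noncomputable def Nsub {V : Type*} [AddCommGroup V] [Module ℂ V] (r m : ℕ) :
    Submodule ℂ (Fin m → (⋀[ℂ]^r V : Submodule ℂ (ExteriorAlgebra ℂ V))) :=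
  ⨅ (i : Fin m) (j : Fin m) (_ : i < j),
    LinearMap.ker (((-1 : ℂ) ^ r • LinearMap.proj i) + LinearMap.proj j :
      (Fin m → (⋀[ℂ]^r V : Submodule ℂ (ExteriorAlgebra ℂ V))) →ₗ[ℂ]
        (⋀[ℂ]^r V : Submodule ℂ (ExteriorAlgebra ℂ V)))

/-- The diagonal subspace `Δ = {(t,…,t)}`. -/
noncomputable def diagSub {V : Type*} [AddCommGroup V] [Module ℂ V] (r m : ℕ) :
    Submodule ℂ (Fin m → (⋀[ℂ]^r V : Submodule ℂ (ExteriorAlgebra ℂ V))) :=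
  LinearMap.range (LinearMap.pi (fun _ : Fin m =>
    (LinearMap.id : (⋀[ℂ]^r V : Submodule ℂ (ExteriorAlgebra ℂ V)) →ₗ[ℂ]
      (⋀[ℂ]^r V : Submodule ℂ (ExteriorAlgebra ℂ V)))))

section Aux

variable {V : Type*} [AddCommGroup V] [Module ℂ V]

lemma ι_mul_pow {p : ℕ} {x : ExteriorAlgebra ℂ V} (hx : x ∈ ⋀[ℂ]^p V) (v : V) :
    ι ℂ v * x = (-1 : ℂ) ^ p • (x * ι ℂ v) := by
  refine Submodule.pow_induction_on_left' (M := LinearMap.range (ι ℂ : V →ₗ[ℂ] ExteriorAlgebra ℂ V))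
    (C := fun n x _ => ι ℂ v * x = (-1:ℂ)^n • (x * ι ℂ v)) ?_ ?_ ?_ hx
  · intro r
    simp [Algebra.commutes]
  · intro x y i hx hy h1 h2
    simp [mul_add, add_mul, h1, h2, smul_add]
  · rintro m ⟨u, rfl⟩ i x hx h
    have key : ι ℂ v * ι ℂ u = - (ι ℂ u * ι ℂ v) :=
      eq_neg_of_add_eq_zero_right (ι_add_mul_swap u v)
    rw [← mul_assoc, key, neg_mul, mul_assoc, h, mul_smul_comm, pow_succ]
    rw [← neg_smul, mul_assoc]
    congr 1
    ring

lemma mul_comm_sign {p q : ℕ} {x y : ExteriorAlgebra ℂ V} (hx : x ∈ ⋀[ℂ]^p V)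
    (hy : y ∈ ⋀[ℂ]^q V) : y * x = (-1 : ℂ) ^ (p * q) • (x * y) := by
  refine Submodule.pow_induction_on_left' (M := LinearMap.range (ι ℂ : V →ₗ[ℂ] ExteriorAlgebra ℂ V))
    (C := fun n y _ => y * x = (-1:ℂ)^(p*n) • (x * y)) ?_ ?_ ?_ hy
  · intro r
    simp [Algebra.commutes]
  · intro a b i ha hb h1 h2
    simp [mul_add, add_mul, h1, h2, smul_add]
  · rintro m ⟨u, rfl⟩ i y hy' h
    rw [mul_assoc, h, mul_smul_comm, ← mul_assoc, ι_mul_pow hx u, smul_mul_assoc,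
      smul_smul, ← mul_assoc]
    congr 1
    rw [Nat.mul_succ, pow_add]

lemma odd_smul_eq_neg {r k : ℕ} (h : Odd k)
    (x : (⋀[ℂ]^r V : Submodule ℂ (ExteriorAlgebra ℂ V))) : ((-1:ℂ)^k) • x = -x := by
  apply Subtype.ext
  push_cast
  rw [h.neg_one_pow]
  exact neg_one_smul ℂ (x : ExteriorAlgebra ℂ V)

lemma sign_sq (r : ℕ) : ((-1:ℂ))^(r*r) = (-1:ℂ)^r := by
  rcases Nat.even_or_odd r with h | h
  · rw [(h.mul_left r).neg_one_pow, h.neg_one_pow]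
  · rw [(h.mul h).neg_one_pow, h.neg_one_pow]

variable {r m : ℕ} (w : ⋀[ℂ]^r V)

lemma pairMap_apply' (i j : Fin m)
    (t : Fin m → (⋀[ℂ]^r V : Submodule ℂ (ExteriorAlgebra ℂ V))) :
    pairMap m w i j t = (w : ExteriorAlgebra ℂ V) * ↑((-1:ℂ)^r • t i + t j) := by
  have hc : ((t i : ExteriorAlgebra ℂ V)) * w
      = (-1:ℂ)^r • ((w : ExteriorAlgebra ℂ V) * t i) := by
    rw [mul_comm_sign w.2 (t i).2, sign_sq]
  simp only [pairMap, LinearMap.add_apply, LinearMap.comp_apply, LinearMap.proj_apply,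
    Submodule.coe_subtype, LinearMap.mulLeft_apply, LinearMap.mulRight_apply, hc]
  push_cast
  rw [mul_add, mul_smul_comm, add_comm]

lemma mem_Tw_iff {t : Fin m → (⋀[ℂ]^r V : Submodule ℂ (ExteriorAlgebra ℂ V))} :
    t ∈ Tw m w ↔ ∀ i j : Fin m, i < j →
      (w : ExteriorAlgebra ℂ V) * ↑((-1:ℂ)^r • t i + t j) = 0 := by
  simp [Tw, Submodule.mem_iInf, LinearMap.mem_ker, pairMap_apply']

lemma mem_Nsub_iff {t : Fin m → (⋀[ℂ]^r V : Submodule ℂ (ExteriorAlgebra ℂ V))} :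
    t ∈ Nsub r m ↔ ∀ i j : Fin m, i < j → (-1:ℂ)^r • t i + t j = 0 := by
  simp [Nsub, Submodule.mem_iInf, LinearMap.mem_ker]

lemma mem_wPerp_iff {x : (⋀[ℂ]^r V : Submodule ℂ (ExteriorAlgebra ℂ V))} :
    x ∈ wPerp w ↔ (w : ExteriorAlgebra ℂ V) * ↑x = 0 := by
  simp [wPerp]

lemma piPerp_le_Tw : Submodule.pi Set.univ (fun _ : Fin m => wPerp w) ≤ Tw m w := by
  intro t ht
  rw [mem_Tw_iff]
  intro i j _
  have hi := (mem_wPerp_iff w).1 (Submodule.mem_pi.1 ht i (Set.mem_univ i))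
  have hj := (mem_wPerp_iff w).1 (Submodule.mem_pi.1 ht j (Set.mem_univ j))
  push_cast
  rw [mul_add, mul_smul_comm, hi, hj, smul_zero, add_zero]

lemma Nsub_le_Tw : Nsub r m ≤ Tw m w := by
  intro t ht
  rw [mem_Tw_iff]
  intro i j hij
  rw [mem_Nsub_iff.1 ht i j hij]
  simp

lemma half_double {M : Type*} [AddCommGroup M] [Module ℂ M] {x : M} (h : x + x = 0) :
    x = 0 := by
  have hx : x = (2:ℂ)⁻¹ • ((2:ℂ) • x) := by rw [smul_smul]; norm_num
  rw [hx, two_smul, h, smul_zero]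

lemma exists_two_ne (hm3 : 3 ≤ m) (i : Fin m) :
    ∃ a b : Fin m, a ≠ b ∧ i ≠ a ∧ i ≠ b := by
  rcases eq_or_ne i ⟨0, by omega⟩ with h | h
  · exact ⟨⟨1, by omega⟩, ⟨2, by omega⟩, by simp [Fin.ext_iff], by simp [h, Fin.ext_iff],
      by simp [h, Fin.ext_iff]⟩
  · rcases eq_or_ne i ⟨1, by omega⟩ with h1 | h1
    · exact ⟨⟨0, by omega⟩, ⟨2, by omega⟩, by simp [Fin.ext_iff], by simp [h1, Fin.ext_iff],
        by simp [h1, Fin.ext_iff]⟩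
    · exact ⟨⟨0, by omega⟩, ⟨1, by omega⟩, by simp [Fin.ext_iff], h, h1⟩

lemma Tw_le_pi (hre : Even r) (hm3 : 3 ≤ m) :
    Tw m w ≤ Submodule.pi Set.univ (fun _ : Fin m => wPerp w) := by
  intro t ht
  rw [mem_Tw_iff] at ht
  have hsym : ∀ i j : Fin m, i ≠ j →
      (w : ExteriorAlgebra ℂ V) * ↑(t i) + (w : ExteriorAlgebra ℂ V) * ↑(t j) = 0 := by
    intro i j hij
    rcases lt_or_gt_of_ne hij with h | h
    · have h0 := ht i j h
      rw [hre.neg_one_pow, one_smul] at h0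
      push_cast at h0
      rw [mul_add] at h0
      exact h0
    · have h0 := ht j i h
      rw [hre.neg_one_pow, one_smul] at h0
      push_cast at h0
      rw [mul_add] at h0
      rw [add_comm]
      exact h0
  rw [Submodule.mem_pi]
  intro i _
  rw [mem_wPerp_iff]
  obtain ⟨a, b, hab, hia, hib⟩ := exists_two_ne hm3 i
  have e1 := hsym i a hia
  have e2 := hsym i b hib
  have e3 := hsym a b hab
  apply half_double (x := (w : ExteriorAlgebra ℂ V) * ↑(t i))
  calc (w : ExteriorAlgebra ℂ V) * ↑(t i) + (w : ExteriorAlgebra ℂ V) * ↑(t i)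
      = ((w : ExteriorAlgebra ℂ V) * ↑(t i) + (w : ExteriorAlgebra ℂ V) * ↑(t a))
        + ((w : ExteriorAlgebra ℂ V) * ↑(t i) + (w : ExteriorAlgebra ℂ V) * ↑(t b))
        - ((w : ExteriorAlgebra ℂ V) * ↑(t a) + (w : ExteriorAlgebra ℂ V) * ↑(t b)) := by abel
    _ = 0 := by rw [e1, e2, e3]; simp

lemma Nsub_eq_bot (hre : Even r) (hm3 : 3 ≤ m) : Nsub (V := V) r m = ⊥ := by
  rw [eq_bot_iff]
  intro t ht
  rw [mem_Nsub_iff] at ht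
  simp only [hre.neg_one_pow, one_smul] at ht
  have hsym : ∀ i j : Fin m, i ≠ j → t i + t j = 0 := by
    intro i j hij
    rcases lt_or_gt_of_ne hij with h | h
    · exact ht i j h
    · rw [add_comm]; exact ht j i h
  rw [Submodule.mem_bot]
  funext i
  obtain ⟨a, b, hab, hia, hib⟩ := exists_two_ne hm3 i
  apply half_double (x := t i)
  calc t i + t i = (t i + t a) + (t i + t b) - (t a + t b) := by abel
    _ = 0 := by rw [hsym i a hia, hsym i b hib, hsym a b hab]; simp

lemma Nsub_eq_diag (hro : Odd r) (hm : 1 ≤ m) : Nsub (V := V) r m = diagSub r m := by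
  apply le_antisymm
  · intro t ht
    rw [mem_Nsub_iff] at ht
    simp only [odd_smul_eq_neg hro] at ht
    simp only [diagSub, LinearMap.mem_range]
    refine ⟨t ⟨0, hm⟩, funext fun j => ?_⟩
    show t ⟨0, hm⟩ = t j
    rcases eq_or_ne j ⟨0, hm⟩ with h | h
    · rw [h]
    · have h0 : (⟨0, hm⟩ : Fin m) < j := by
        rw [Fin.lt_def]
        exact Nat.pos_of_ne_zero (fun h0 => h (Fin.ext h0))
      exact (neg_add_eq_zero.mp (ht _ j h0))
  · rintro t ⟨c, rfl⟩
    rw [mem_Nsub_iff]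
    intro i j hij
    show ((-1:ℂ)^r) • c + c = 0
    simp only [odd_smul_eq_neg hro, neg_add_cancel]

end Aux

theorem Tw_eq_Nsub_add_wPerp_pi
    {V : Type*} [AddCommGroup V] [Module ℂ V] [FiniteDimensional ℂ V]
    {r m : ℕ} (hr : 1 ≤ r) (hm : 1 ≤ m) (hV : finrank ℂ V = r * m)
    (w : ⋀[ℂ]^r V) :
    Tw m w = Nsub r m + Submodule.pi Set.univ (fun _ : Fin m => wPerp w) ∧
      (3 ≤ m →
        (Even r → Tw m w = Submodule.pi Set.univ (fun _ : Fin m => wPerp w)) ∧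
        (Odd r → Tw m w = diagSub r m +
          Submodule.pi Set.univ (fun _ : Fin m => wPerp w))) := by
  have part1 : Tw m w = Nsub r m + Submodule.pi Set.univ (fun _ : Fin m => wPerp w) := by
    apply le_antisymm
    · intro t ht
      rw [Submodule.add_eq_sup]
      by_cases hcase : Even r ∧ 3 ≤ m
      · exact Submodule.mem_sup_right (Tw_le_pi w hcase.1 hcase.2 ht)
      · rw [mem_Tw_iff] at ht
        set i0 : Fin m := ⟨0, hm⟩ with hi0
        set n : Fin m → (⋀[ℂ]^r V : Submodule ℂ (ExteriorAlgebra ℂ V)) :=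
          fun i => if i = i0 then t i0 else -((-1:ℂ)^r • t i0) with hn
        have hnN : n ∈ Nsub (V := V) r m := by
          rw [mem_Nsub_iff]
          intro i j hij
          have hji0 : j ≠ i0 := by
            intro h
            rw [h] at hij
            exact Nat.not_lt_zero i.val (by simpa [Fin.lt_def, hi0] using hij)
          rcases eq_or_ne i i0 with h | h
          · simp [hn, h, hji0]
          · have hro : Odd r := by
              rw [← Nat.not_even_iff_odd]
              intro he
              apply hcase
              refine ⟨he, ?_⟩
              have h1 : (0:ℕ) < i.val := Nat.pos_of_ne_zero (fun h0 => h (Fin.ext h0))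
              have h2 : i.val < j.val := hij
              have h3 : j.val < m := j.isLt
              omega
            simp [hn, h, hji0, odd_smul_eq_neg hro]
        have hpP : (t - n) ∈ Submodule.pi Set.univ (fun _ : Fin m => wPerp w) := by
          rw [Submodule.mem_pi]
          intro j _
          rw [mem_wPerp_iff]
          rcases eq_or_ne j i0 with h | h
          · simp [hn, h]
          · have h0 : i0 < j := by
              rw [Fin.lt_def]
              exact Nat.pos_of_ne_zero (fun h0 => h (Fin.ext h0))
            have heq : t j - n j = (-1:ℂ)^r • t i0 + t j := by
              simp [hn, h, sub_neg_eq_add, add_comm]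
            rw [Pi.sub_apply, heq]
            exact ht i0 j h0
        have hdecomp : t = n + (t - n) := by abel
        rw [hdecomp]
        exact Submodule.add_mem_sup hnN hpP
    · rw [Submodule.add_eq_sup, sup_le_iff]
      exact ⟨Nsub_le_Tw w, piPerp_le_Tw w⟩
  refine ⟨part1, fun hm3 => ⟨fun hre => ?_, fun hro => ?_⟩⟩
  · rw [part1, Nsub_eq_bot hre hm3, Submodule.add_eq_sup, bot_sup_eq]
  · rw [part1, Nsub_eq_diag hro hm]
end

section
/- Let r ≥ 1, m ≥ 1 be integers, let V be a complex vector space of dimension rm, let (w_1,…,w_m) ∈ (⋀^r V)^m, and let 1 ≤ k ≤ m. Then the following are equivalent: (a) for every i with 0 ≤ i ≤ k−1 and every (t_1,…,t_m) ∈ (⋀^r V)^m one has Σ_{S ⊆ M, |S| = i} sgn(σ_S) · w_{M∖S} ∧ t_S = 0 in ⋀^{rm} V; (b) w_S = 0 for every S ⊆ M with |S| = m−k+1. -/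
open Module ExteriorAlgebra

/-- The permutation `σ_S` of `Fin m` listing first the complement of `S` in increasing
order, then the elements of `S` in increasing order. -/
def sigmaPerm {m : ℕ} (S : Finset (Fin m)) : Equiv.Perm (Fin m) :=
  (finCongr (by simp [Finset.card_compl_add_card])).symm.trans <|
    finSumFinEquiv.symm.trans <|
      (Equiv.sumCongr (Sᶜ.orderIsoOfFin rfl).toEquiv (S.orderIsoOfFin rfl).toEquiv).trans <|
        (Equiv.sumComm _ _).trans <|
          (Equiv.sumCongr (Equiv.refl _)
              (Equiv.subtypeEquivRight fun _ => Finset.mem_compl)).trans <|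
            Equiv.sumCompl (· ∈ S)

/-- The ordered wedge product `w_S = w_{s_1} ∧ ⋯ ∧ w_{s_k}` for `S = {s_1 < ⋯ < s_k}`,
with `w_∅ = 1`. -/
noncomputable def wedgeFinset {m : ℕ} {V : Type*} [AddCommGroup V] [Module ℂ V]
    (w : Fin m → ExteriorAlgebra ℂ V) (S : Finset (Fin m)) : ExteriorAlgebra ℂ V :=
  ((S.sort (· ≤ ·)).map w).prod

/-- The `i`-th polar expression `∑_{|S| = i} sgn(σ_S) • w_{M∖S} ∧ t_S`. -/
noncomputable def polarSum {m : ℕ} {V : Type*} [AddCommGroup V] [Module ℂ V] {r : ℕ}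
    (w t : Fin m → (⋀[ℂ]^r V : Submodule ℂ (ExteriorAlgebra ℂ V))) (i : ℕ) :
    ExteriorAlgebra ℂ V :=
  ∑ S ∈ Finset.powersetCard i (Finset.univ : Finset (Fin m)),
    (Equiv.Perm.sign (sigmaPerm S) : ℤ) •
      (wedgeFinset (fun a => (w a : ExteriorAlgebra ℂ V)) Sᶜ *
        wedgeFinset (fun a => (t a : ExteriorAlgebra ℂ V)) S)


namespace PolarProof


variable {V : Type*} [AddCommGroup V] [Module ℂ V]

/-- anticommutation -/
theorem ι_anticomm (x y : V) : ι ℂ x * ι ℂ y = -(ι ℂ y * ι ℂ x) :=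
  eq_neg_of_add_eq_zero_left (ι_add_mul_swap x y)

variable {N : ℕ} (b : Basis (Fin N) ℂ V)

/-- product of basis wedge factors along an index list -/
noncomputable def eL (l : List (Fin N)) : ExteriorAlgebra ℂ V :=
  (l.map fun i => ι ℂ (b i)).prod

@[simp] theorem eL_nil : eL b ([] : List (Fin N)) = 1 := rfl

theorem eL_cons (a : Fin N) (l : List (Fin N)) :
    eL b (a :: l) = ι ℂ (b a) * eL b l := by
  simp [eL]

theorem eL_mul_ι (v : V) (l : List (Fin N)) :
    eL b l * ι ℂ v = ((-1 : ℂ)) ^ l.length • (ι ℂ v * eL b l) := by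
  induction l with
  | nil => simp
  | cons a t ih =>
    rw [eL_cons, mul_assoc, ih, mul_smul_comm, ← mul_assoc, ι_anticomm (b a) v]
    rw [List.length_cons, pow_succ]
    simp [mul_assoc, smul_smul]

theorem ι_mul_eL_of_mem {a : Fin N} {l : List (Fin N)} (h : a ∈ l) :
    ι ℂ (b a) * eL b l = 0 := by
  induction l with
  | nil => simp at h
  | cons c t ih =>
    rw [eL_cons]
    rcases List.mem_cons.1 h with h | h
    · subst h
      rw [← mul_assoc, ι_sq_zero, zero_mul]
    · rw [← mul_assoc, ι_anticomm (b a) (b c), neg_mul, mul_assoc, ih h, mul_zero, neg_zero]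

theorem ι_mul_eL_orderedInsert {a : Fin N} {l : List (Fin N)} (h : a ∉ l) :
    ∃ n : ℕ, ι ℂ (b a) * eL b l = ((-1 : ℂ)) ^ n • eL b (l.orderedInsert (· ≤ ·) a) := by
  induction l with
  | nil => exact ⟨0, by simp [eL_cons]⟩
  | cons c t ih =>
    have hac : a ≠ c := fun hc => h (hc ▸ List.mem_cons_self)
    by_cases hle : a ≤ c
    · exact ⟨0, by simp [List.orderedInsert, hle, eL_cons]⟩
    · have hat : a ∉ t := fun ht => h (List.mem_cons_of_mem _ ht)
      obtain ⟨n, hn⟩ := ih hat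
      refine ⟨n + 1, ?_⟩
      rw [eL_cons, ← mul_assoc, ι_anticomm (b a) (b c), neg_mul, mul_assoc, hn,
        List.orderedInsert, if_neg hle, eL_cons, mul_smul_comm, ← neg_smul, pow_succ]
      simp [smul_smul]


theorem sort_min'_cons {m : ℕ} {A : Finset (Fin m)} (h : A.Nonempty) :
    Finset.sort A (· ≤ ·) =
      A.min' h :: Finset.sort (A.erase (A.min' h)) (· ≤ ·) := by
  conv_lhs => rw [← Finset.insert_erase (A.min'_mem h)]
  rw [Finset.sort_insert]
  · intro c hc
    exact A.min'_le c (Finset.mem_of_mem_erase hc)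
  · exact Finset.notMem_erase _ _

theorem wedge_head {m : ℕ} (w : Fin m → ExteriorAlgebra ℂ V) {A : Finset (Fin m)}
    (h : A.Nonempty) :
    wedgeFinset w A = w (A.min' h) * wedgeFinset w (A.erase (A.min' h)) := by
  rw [wedgeFinset, sort_min'_cons h, List.map_cons, List.prod_cons]
  rfl

theorem sort_orderedInsert {a : Fin N} {A : Finset (Fin N)} (h : a ∉ A) :
    Finset.sort (insert a A) (· ≤ ·) =
      (Finset.sort A (· ≤ ·)).orderedInsert (· ≤ ·) a := by
  refine List.Perm.eq_of_pairwise' (Finset.pairwise_sort _ _)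
    ((Finset.pairwise_sort _ _).orderedInsert a _) ?_
  exact (Finset.sort_perm_toList _ _).trans <| (Finset.toList_insert h).trans <|
    ((Finset.sort_perm_toList _ _).symm.cons a).trans (List.perm_orderedInsert _ a _).symm

/-- notation shortcut -/
noncomputable abbrev eF (A : Finset (Fin N)) : ExteriorAlgebra ℂ V :=
  wedgeFinset (fun i => ι ℂ (b i)) A

theorem eF_eq_eL (A : Finset (Fin N)) : eF b A = eL b (Finset.sort A (· ≤ ·)) := rfl

theorem ι_mul_eF {a : Fin N} {A : Finset (Fin N)} (h : a ∉ A) :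
    ∃ n : ℕ, ι ℂ (b a) * eF b A = ((-1 : ℂ)) ^ n • eF b (insert a A) := by
  obtain ⟨n, hn⟩ := ι_mul_eL_orderedInsert b (l := Finset.sort A (· ≤ ·))
    (a := a) (by simpa using h)
  exact ⟨n, by rw [eF_eq_eL, hn, eF_eq_eL, sort_orderedInsert h]⟩

theorem ι_mul_eF_of_mem {a : Fin N} {A : Finset (Fin N)} (h : a ∈ A) :
    ι ℂ (b a) * eF b A = 0 :=
  ι_mul_eL_of_mem b (by simpa using h)

theorem eF_mul_eF_of_mem {a : Fin N} {A B : Finset (Fin N)} (ha : a ∈ A) (hb : a ∈ B) :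
    eF b A * eF b B = 0 := by
  obtain ⟨n, hn⟩ := ι_mul_eF b (Finset.notMem_erase a B)
  rw [Finset.insert_erase hb] at hn
  have h2 : eF b A * (ι ℂ (b a) * eF b (B.erase a)) = 0 := by
    rw [← mul_assoc, eF_eq_eL b A, eL_mul_ι, smul_mul_assoc, mul_assoc, ← mul_assoc,
      ι_mul_eL_of_mem b ((Finset.mem_sort _).mpr ha), zero_mul, smul_zero]
  have h3 : ((-1:ℂ))^n • (eF b A * eF b B) = 0 := by
    rw [← mul_smul_comm, ← hn, h2]
  exact (smul_eq_zero.mp h3).resolve_left (pow_ne_zero n (by norm_num))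

theorem eF_mul_eF_disjoint {A B : Finset (Fin N)} (h : Disjoint A B) :
    ∃ n : ℕ, eF b A * eF b B = ((-1 : ℂ)) ^ n • eF b (A ∪ B) := by
  obtain ⟨d, hc⟩ : ∃ d, A.card = d := ⟨_, rfl⟩
  induction d generalizing A with
  | zero =>
    rw [Finset.card_eq_zero] at hc
    subst hc
    exact ⟨0, by simp [eF_eq_eL, eL]⟩
  | succ d ih =>
    have hA : A.Nonempty := by
      rw [← Finset.card_pos, hc]; omega
    set a := A.min' hA with ha
    have haA : a ∈ A := A.min'_mem hA
    have hd : Disjoint (A.erase a) B := Finset.disjoint_of_subset_left (Finset.erase_subset _ _) h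
    obtain ⟨n₁, h₁⟩ := ih hd (by rw [Finset.card_erase_of_mem haA, hc]; rfl)
    have haB : a ∉ (A.erase a) ∪ B := by
      simp only [Finset.mem_union, Finset.notMem_erase, false_or]
      exact fun hx => (Finset.disjoint_left.1 h haA) hx
    obtain ⟨n₂, h₂⟩ := ι_mul_eF b haB
    refine ⟨n₁ + n₂, ?_⟩
    have hu : insert a (A.erase a ∪ B) = A ∪ B := by
      rw [← Finset.insert_union, Finset.insert_erase haA]
    rw [eF_eq_eL b A, sort_min'_cons hA, eL_cons, ← eF_eq_eL, mul_assoc, h₁,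
      mul_smul_comm, h₂, hu, smul_smul, ← pow_add]



/-- the submodule of 1-vectors -/
abbrev pR : Submodule ℂ (ExteriorAlgebra ℂ V) :=
  LinearMap.range (ι ℂ : V →ₗ[ℂ] ExteriorAlgebra ℂ V)

theorem prod_mem_pow (Q : Submodule ℂ (ExteriorAlgebra ℂ V)) :
    ∀ (l : List (ExteriorAlgebra ℂ V)), (∀ x ∈ l, x ∈ Q) → l.prod ∈ Q ^ l.length := by
  intro l
  induction l with
  | nil =>
    intro _
    rw [List.prod_nil, List.length_nil, pow_zero]
    exact Submodule.mem_one.mpr ⟨1, map_one _⟩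
  | cons h t ih =>
    intro hl
    rw [List.prod_cons, List.length_cons, pow_succ']
    exact Submodule.mul_mem_mul (hl _ (List.mem_cons_self))
      (ih fun x hx => hl x (List.mem_cons_of_mem _ hx))

theorem eL_mem (l : List (Fin N)) : eL b l ∈ (pR (V := V)) ^ l.length := by
  have := prod_mem_pow (pR (V := V)) (l.map fun i => ι ℂ (b i)) ?_
  · simpa [eL] using this
  · intro x hx
    obtain ⟨i, _, rfl⟩ := List.mem_map.mp hx
    exact LinearMap.mem_range_self _ _

/-- iterated contraction along a list of indices (first element applied first) -/
noncomputable def cMap (l : List (Fin N)) :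
    ExteriorAlgebra ℂ V →ₗ[ℂ] ExteriorAlgebra ℂ V :=
  l.foldr (fun a g => g ∘ₗ CliffordAlgebra.contractLeft (b.coord a)) LinearMap.id

@[simp] theorem cMap_nil (x : ExteriorAlgebra ℂ V) : cMap b [] x = x := rfl

theorem cMap_cons (a : Fin N) (l : List (Fin N)) (x : ExteriorAlgebra ℂ V) :
    cMap b (a :: l) x = cMap b l (CliffordAlgebra.contractLeft (b.coord a) x) := rfl

theorem coord_self_apply (a c : Fin N) :
    b.coord a (b c) = if c = a then 1 else 0 := by
  simp [Basis.coord_apply, Basis.repr_self, Finsupp.single_apply]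

theorem contract_eL_not_mem {a : Fin N} {l : List (Fin N)} (h : a ∉ l) :
    CliffordAlgebra.contractLeft (b.coord a) (eL b l) = 0 := by
  induction l with
  | nil =>
    simpa using CliffordAlgebra.contractLeft_one (Q := (0 : QuadraticForm ℂ V)) (b.coord a)
  | cons c t ih =>
    rw [eL_cons, CliffordAlgebra.contractLeft_ι_mul, ih (fun ht => h (List.mem_cons_of_mem _ ht)),
      mul_zero, sub_zero, coord_self_apply, if_neg, zero_smul]
    exact fun hc => h (hc ▸ List.mem_cons_self)

theorem contract_pow {d : Module.Dual ℂ V} {j : ℕ} {x : ExteriorAlgebra ℂ V}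
    (hx : x ∈ (pR (V := V)) ^ j) :
    CliffordAlgebra.contractLeft d x ∈ (pR (V := V)) ^ (j - 1) ∧
      (j = 0 → CliffordAlgebra.contractLeft d x = 0) := by
  refine Submodule.pow_induction_on_left' (pR (V := V))
    (C := fun n y _ => CliffordAlgebra.contractLeft d y ∈ (pR (V := V)) ^ (n - 1) ∧
      (n = 0 → CliffordAlgebra.contractLeft d y = 0)) ?_ ?_ ?_ hx
  · intro r
    rw [CliffordAlgebra.contractLeft_algebraMap]
    exact ⟨Submodule.zero_mem _, fun _ => rfl⟩
  · rintro x y i hx hy ⟨h1, h2⟩ ⟨h3, h4⟩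
    refine ⟨by rw [map_add]; exact Submodule.add_mem _ h1 h3, fun h0 => ?_⟩
    rw [map_add, h2 h0, h4 h0, add_zero]
  · rintro m ⟨v, rfl⟩ i x hxi ⟨h1, h2⟩
    refine ⟨?_, fun h0 => absurd h0 (Nat.succ_ne_zero i)⟩
    rw [CliffordAlgebra.contractLeft_ι_mul]
    have hsub : d v • x ∈ (pR (V := V)) ^ i := Submodule.smul_mem _ _ hxi
    rcases Nat.eq_zero_or_pos i with hi | hi
    · subst hi
      rw [h2 rfl, mul_zero, sub_zero]
      simpa using hsub
    · obtain ⟨i', rfl⟩ : ∃ i', i = i' + 1 := ⟨i - 1, by omega⟩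
      refine Submodule.sub_mem _ (by simpa using hsub) ?_
      have : (ι ℂ) v * CliffordAlgebra.contractLeft d x ∈
          pR (V := V) * (pR (V := V)) ^ i' :=
        Submodule.mul_mem_mul (LinearMap.mem_range_self _ _) (by simpa using h1)
      rw [← pow_succ'] at this
      simpa using this

theorem cMap_eq_zero_of_lt {l : List (Fin N)} :
    ∀ {j : ℕ} {x : ExteriorAlgebra ℂ V}, x ∈ (pR (V := V)) ^ j → j < l.length →
      cMap b l x = 0 := by
  induction l with
  | nil => intro j x _ h; exact absurd h (by simp)
  | cons a t ih =>
    intro j x hx h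
    rw [cMap_cons]
    rcases Nat.eq_zero_or_pos j with hj | hj
    · subst hj
      rw [(contract_pow hx).2 rfl, map_zero]
    · refine ih (contract_pow hx).1 ?_
      simp only [List.length_cons] at h
      omega

theorem cMap_mem_pow {l : List (Fin N)} :
    ∀ {j : ℕ} {x : ExteriorAlgebra ℂ V}, x ∈ (pR (V := V)) ^ j →
      cMap b l x ∈ (pR (V := V)) ^ (j - l.length) := by
  induction l with
  | nil => intro j x hx; simpa using hx
  | cons a t ih =>
    intro j x hx
    rw [cMap_cons]
    have := ih (contract_pow (d := b.coord a) hx).1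
    have heq : j - 1 - t.length = j - (a :: t).length := by
      simp only [List.length_cons]
      omega
    rwa [heq] at this

theorem cMap_ι_mul {l : List (Fin N)} {v : V} (h : ∀ a ∈ l, b.coord a v = 0)
    (x : ExteriorAlgebra ℂ V) :
    cMap b l (ι ℂ v * x) = ((-1 : ℂ)) ^ l.length • (ι ℂ v * cMap b l x) := by
  induction l generalizing x with
  | nil => simp
  | cons a t ih =>
    rw [cMap_cons, CliffordAlgebra.contractLeft_ι_mul, h a (List.mem_cons_self), zero_smul,
      zero_sub, map_neg, ih (fun c hc => h c (List.mem_cons_of_mem _ hc)), cMap_cons,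
      List.length_cons, pow_succ]
    simp [smul_smul]

theorem cMap_eL_diag :
    ∀ {l₁ l₂ : List (Fin N)}, l₁.Pairwise (· < ·) → l₂.Pairwise (· < ·) →
      l₁.length = l₂.length →
      cMap b l₁ (eL b l₂) = if l₁ = l₂ then 1 else 0 := by
  intro l₁
  induction l₁ with
  | nil =>
    intro l₂ _ _ hlen
    rw [List.length_nil] at hlen
    rw [List.length_eq_zero_iff.mp hlen.symm]
    simp
  | cons a t ih =>
    intro l₂ hs1 hs2 hlen
    rcases l₂ with _ | ⟨c, t'⟩
    · simp at hlen
    rcases lt_trichotomy a c with hac | hac | hac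
    · -- a < c : a not in l₂
      have hnot : a ∉ c :: t' := by
        intro hmem
        rcases List.mem_cons.mp hmem with h | h
        · omega
        · have := (List.pairwise_cons.mp hs2).1 a h
          omega
      rw [cMap_cons, contract_eL_not_mem b hnot, map_zero, if_neg]
      intro heq
      have : a = c := by injection heq
      omega
    · -- a = c
      subst hac
      have hat' : a ∉ t' := fun hmem => by
        have := (List.pairwise_cons.mp hs2).1 a hmem; omega
      rw [cMap_cons, eL_cons, CliffordAlgebra.contractLeft_ι_mul,
        contract_eL_not_mem b hat', mul_zero, sub_zero, coord_self_apply, if_pos rfl, one_smul,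
        ih (List.pairwise_cons.mp hs1).2 (List.pairwise_cons.mp hs2).2
          (by simpa using hlen)]
      by_cases ht : t = t' <;> simp [ht]
    · -- c < a
      have hct : ∀ e ∈ t, b.coord e (b c) = 0 := by
        intro e he
        rw [coord_self_apply, if_neg]
        have := (List.pairwise_cons.mp hs1).1 e he
        omega
      rw [cMap_cons, eL_cons, CliffordAlgebra.contractLeft_ι_mul, coord_self_apply,
        if_neg (by omega), zero_smul, zero_sub, map_neg, cMap_ι_mul b hct]
      have hz : cMap b t (CliffordAlgebra.contractLeft (b.coord a) (eL b t')) = 0 := by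
        rcases Nat.eq_zero_or_pos t'.length with h0 | h0
        · rw [List.length_eq_zero_iff.mp h0]
          rw [(contract_pow (by simpa using eL_mem b ([] : List (Fin N)))).2 rfl, map_zero]
        · refine cMap_eq_zero_of_lt b (contract_pow (eL_mem b t')).1 ?_
          have : t'.length = t.length + 1 - 1 := by
            simp only [List.length_cons] at hlen; omega
          omega
      rw [hz, mul_zero, smul_zero, neg_zero, if_neg]
      intro heq
      have : a = c := by injection heq
      omega



theorem eF_mem (A : Finset (Fin N)) : eF b A ∈ (pR (V := V)) ^ A.card := by
  have := eL_mem b (Finset.sort A (· ≤ ·))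
  rwa [Finset.length_sort] at this

theorem span_eF (d : ℕ) :
    (pR (V := V)) ^ d ≤ Submodule.span ℂ
      {x | ∃ A : Finset (Fin N), A.card = d ∧ eF b A = x} := by
  induction d with
  | zero =>
    rw [pow_zero]
    intro x hx
    obtain ⟨γ, rfl⟩ := Submodule.mem_one.mp hx
    have h1 : (1 : ExteriorAlgebra ℂ V) = eF b (∅ : Finset (Fin N)) := by
      simp [eF_eq_eL, eL]
    rw [Algebra.algebraMap_eq_smul_one, h1]
    exact Submodule.smul_mem _ _ (Submodule.subset_span ⟨∅, Finset.card_empty, rfl⟩)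
  | succ d ih =>
    rw [pow_succ']
    refine Submodule.mul_le.mpr ?_
    rintro _ ⟨v, rfl⟩ y hy
    have hy' := ih hy
    refine Submodule.span_induction (p := fun y _ => ι ℂ v * y ∈ Submodule.span ℂ
      {x | ∃ A : Finset (Fin N), A.card = d + 1 ∧ eF b A = x}) ?_ ?_ ?_ ?_ hy'
    · rintro x ⟨A, hA, rfl⟩
      have hv : (ι ℂ v : ExteriorAlgebra ℂ V) = ∑ i, b.repr v i • ι ℂ (b i) := by
        conv_lhs => rw [← b.sum_repr v]
        simp only [map_sum, map_smul]
      rw [hv, Finset.sum_mul]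
      refine Submodule.sum_mem _ fun i _ => ?_
      rw [smul_mul_assoc]
      refine Submodule.smul_mem _ _ ?_
      by_cases hiA : i ∈ A
      · rw [ι_mul_eF_of_mem b hiA]
        exact Submodule.zero_mem _
      · obtain ⟨n, hn⟩ := ι_mul_eF b hiA
        rw [hn]
        refine Submodule.smul_mem _ _ (Submodule.subset_span ⟨insert i A, ?_, rfl⟩)
        rw [Finset.card_insert_of_notMem hiA, hA]
    · show ι ℂ v * 0 ∈ _
      rw [mul_zero]; exact Submodule.zero_mem _
    · intro x y _ _ h1 h2
      show ι ℂ v * (x + y) ∈ _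
      rw [mul_add]; exact Submodule.add_mem _ h1 h2
    · intro a x _ h1
      show ι ℂ v * (a • x) ∈ _
      rw [mul_smul_comm]; exact Submodule.smul_mem _ _ h1

theorem repr_eq {d : ℕ} {y : ExteriorAlgebra ℂ V} (hy : y ∈ (pR (V := V)) ^ d) :
    y = ∑ A ∈ Finset.powersetCard d (Finset.univ : Finset (Fin N)),
      cMap b (Finset.sort A (· ≤ ·)) y * eF b A := by
  set T : ExteriorAlgebra ℂ V →ₗ[ℂ] ExteriorAlgebra ℂ V :=
    ∑ A ∈ Finset.powersetCard d (Finset.univ : Finset (Fin N)),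
      (LinearMap.mulRight ℂ (eF b A)) ∘ₗ (cMap b (Finset.sort A (· ≤ ·))) with hT
  have hTy : ∀ z, T z = ∑ A ∈ Finset.powersetCard d (Finset.univ : Finset (Fin N)),
      cMap b (Finset.sort A (· ≤ ·)) z * eF b A := by
    intro z
    rw [hT, LinearMap.sum_apply]
    simp [LinearMap.mulRight_apply]
  have key : ∀ z, z ∈ Submodule.span ℂ
      {x | ∃ A : Finset (Fin N), A.card = d ∧ eF b A = x} → T z = z := by
    intro z hz
    refine Submodule.span_induction ?_ ?_ ?_ ?_ hz
    · rintro x ⟨C, hC, rfl⟩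
      rw [hTy]
      rw [Finset.sum_eq_single_of_mem C (Finset.mem_powersetCard_univ.mpr hC)]
      · rw [eF_eq_eL b C, cMap_eL_diag b ((Finset.sortedLT_sort C).pairwise) ((Finset.sortedLT_sort C).pairwise) rfl,
          if_pos rfl, one_mul]
      · intro A hA hAC
        rw [eF_eq_eL b C, cMap_eL_diag b ((Finset.sortedLT_sort A).pairwise) ((Finset.sortedLT_sort C).pairwise)
            (by rw [Finset.length_sort, Finset.length_sort, hC,
              Finset.mem_powersetCard_univ.mp hA]),
          if_neg, zero_mul]
        intro hs
        exact hAC (by rw [← Finset.sort_toFinset A (· ≤ ·), hs, Finset.sort_toFinset])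
    · exact map_zero T
    · intro u w _ _ h1 h2
      rw [map_add, h1, h2]
    · intro a u _ h1
      rw [map_smul, h1]
  rw [← hTy y]
  exact (key y (span_eF b d hy)).symm



theorem sort_univ_eq : Finset.sort (Finset.univ : Finset (Fin N)) (· ≤ ·) =
    List.finRange N := by
  refine List.Perm.eq_of_pairwise' (Finset.pairwise_sort _ _) ?_ ?_
  · rw [← List.ofFn_id]
    exact (List.sortedLE_ofFn_iff.mpr monotone_id).pairwise
  · exact List.perm_of_nodup_nodup_toFinset_eq (Finset.sort_nodup _ _)
      (List.nodup_finRange N) (by rw [Finset.sort_toFinset, List.toFinset_finRange])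

theorem eF_univ_eq_ιMulti : eF b (Finset.univ : Finset (Fin N)) = ιMulti ℂ N (⇑b) := by
  rw [eF_eq_eL, sort_univ_eq, ιMulti_apply, eL, ← List.ofFn_eq_map]

theorem top_ne_zero : eF b (Finset.univ : Finset (Fin N)) ≠ 0 := by
  intro h0
  set g : ∀ i : ℕ, V [⋀^Fin i]→ₗ[ℂ] ℂ :=
    Function.update (fun _ => 0) N b.det with hg
  have h1 : liftAlternating g (eF b (Finset.univ : Finset (Fin N))) = 1 := by
    rw [eF_univ_eq_ιMulti, liftAlternating_apply_ιMulti, hg, Function.update_self,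
      Basis.det_self]
  rw [h0, map_zero] at h1
  exact zero_ne_one h1

include b in
theorem nondeg {d : ℕ} (hd : d ≤ N) {y : ExteriorAlgebra ℂ V}
    (hy : y ∈ (pR (V := V)) ^ d)
    (h : ∀ x ∈ (pR (V := V)) ^ (N - d), y * x = 0) : y = 0 := by
  have hrep := repr_eq b hy
  rw [hrep]
  refine Finset.sum_eq_zero ?_
  intro B hB
  have hBcard : B.card = d := Finset.mem_powersetCard_univ.mp hB
  -- the coefficient is a scalar
  have hc0 : cMap b (Finset.sort B (· ≤ ·)) y ∈ (pR (V := V)) ^ 0 := by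
    have := cMap_mem_pow b (l := Finset.sort B (· ≤ ·)) hy
    rwa [Finset.length_sort, hBcard, Nat.sub_self] at this
  rw [pow_zero] at hc0
  obtain ⟨γ, hγ⟩ := Submodule.mem_one.mp hc0
  -- pair with the complement
  have hBc : eF b Bᶜ ∈ (pR (V := V)) ^ (N - d) := by
    have := eF_mem b Bᶜ
    rwa [Finset.card_compl, Fintype.card_fin, hBcard] at this
  have h0 : y * eF b Bᶜ = 0 := h _ hBc
  rw [hrep, Finset.sum_mul] at h0
  rw [Finset.sum_eq_single_of_mem B hB] at h0
  · obtain ⟨n, hn⟩ := eF_mul_eF_disjoint b (disjoint_compl_right : Disjoint B Bᶜ)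
    rw [mul_assoc, hn, Finset.union_compl, ← hγ, ← Algebra.smul_def, smul_smul] at h0
    have hγ0 : γ * (-1 : ℂ) ^ n = 0 := by
      rcases smul_eq_zero.mp h0 with h' | h'
      · exact h'
      · exact absurd h' (top_ne_zero b)
    have : γ = 0 := by
      rcases mul_eq_zero.mp hγ0 with h' | h'
      · exact h'
      · exact absurd h' (pow_ne_zero n (by norm_num))
    rw [← hγ, this, map_zero, zero_mul]
  · intro A hA hAB
    have : ∃ i, i ∈ A ∧ i ∈ Bᶜ := by
      by_contra hcon
      push_neg at hcon
      have hsub : A ⊆ B := fun i hi => by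
        by_contra hiB
        exact (hcon i hi) (Finset.mem_compl.mpr hiB)
      exact hAB (Finset.eq_of_subset_of_card_le hsub
        (by rw [hBcard, Finset.mem_powersetCard_univ.mp hA]))
    obtain ⟨i, hiA, hiBc⟩ := this
    rw [mul_assoc, eF_mul_eF_of_mem b hiA hiBc, mul_zero]



theorem wedge_mem {m r : ℕ} (w : Fin m → ExteriorAlgebra ℂ V)
    (hw : ∀ a, w a ∈ (pR (V := V)) ^ r) (S : Finset (Fin m)) :
    wedgeFinset w S ∈ (pR (V := V)) ^ (r * S.card) := by
  rw [pow_mul]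
  have := prod_mem_pow ((pR (V := V)) ^ r) ((S.sort (· ≤ ·)).map w) ?_
  · rwa [List.length_map, Finset.length_sort] at this
  · intro x hx
    obtain ⟨a, _, rfl⟩ := List.mem_map.mp hx
    exact hw a

theorem wedge_zero_of_all {m c : ℕ} (w : Fin m → ExteriorAlgebra ℂ V) (hc : 1 ≤ c)
    (hzero : ∀ S : Finset (Fin m), S.card = c → wedgeFinset w S = 0) :
    ∀ T : Finset (Fin m), c ≤ T.card → wedgeFinset w T = 0 := by
  intro T hT
  obtain ⟨e, he⟩ : ∃ e, T.card - c = e := ⟨_, rfl⟩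
  induction e generalizing T with
  | zero => exact hzero T (by omega)
  | succ e ih =>
    have hne : T.Nonempty := by rw [← Finset.card_pos]; omega
    rw [wedge_head w hne, ih (T.erase (T.min' hne)) ?h1 ?h2, mul_zero]
    case h1 => rw [Finset.card_erase_of_mem (T.min'_mem hne)]; omega
    case h2 => rw [Finset.card_erase_of_mem (T.min'_mem hne)]; omega

theorem key_P (r : ℕ) : ∀ (n : ℕ) (W : ExteriorAlgebra ℂ V),
    (∀ l : List (ExteriorAlgebra ℂ V), (∀ z ∈ l, z ∈ (pR (V := V)) ^ r) →
      l.length = n → W * l.prod = 0) →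
    ∀ x ∈ ((pR (V := V)) ^ r) ^ n, W * x = 0 := by
  intro n
  induction n with
  | zero =>
    intro W hW x hx
    rw [pow_zero] at hx
    obtain ⟨γ, rfl⟩ := Submodule.mem_one.mp hx
    have h1 := hW [] (by simp) rfl
    rw [List.prod_nil] at h1
    rw [Algebra.algebraMap_eq_smul_one, mul_smul_comm, h1, smul_zero]
  | succ n ih =>
    intro W hW x hx
    rw [pow_succ'] at hx
    refine Submodule.mul_induction_on hx ?_ ?_
    · intro u hu z hz
      rw [← mul_assoc]
      refine ih (W * u) ?_ z hz
      intro l hl hlen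
      rw [mul_assoc, ← List.prod_cons]
      refine hW (u :: l) ?_ (by simp [hlen])
      intro y hy
      rcases List.mem_cons.mp hy with rfl | hy
      · exact hu
      · exact hl y hy
    · intro x y h1 h2
      rw [mul_add, h1, h2, add_zero]

theorem wedge_list {m r : ℕ} (S₀ : Finset (Fin m)) (l : List (ExteriorAlgebra ℂ V))
    (hl : ∀ z ∈ l, z ∈ (pR (V := V)) ^ r) (hlen : l.length = S₀.card) :
    ∃ t : Fin m → (⋀[ℂ]^r V : Submodule ℂ (ExteriorAlgebra ℂ V)),
      wedgeFinset (fun a => (t a : ExteriorAlgebra ℂ V)) S₀ = l.prod := by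
  classical
  have hlt : ∀ j ∈ S₀, (S₀.sort (· ≤ ·)).idxOf j < l.length := by
    intro j hj
    have : (S₀.sort (· ≤ ·)).idxOf j < (S₀.sort (· ≤ ·)).length :=
      List.idxOf_lt_length_iff.mpr ((Finset.mem_sort _).mpr hj)
    rwa [Finset.length_sort, ← hlen] at this
  refine ⟨fun j => if h : j ∈ S₀ then
    ⟨l[(S₀.sort (· ≤ ·)).idxOf j]'(hlt j h), hl _ (List.getElem_mem _)⟩ else 0, ?_⟩
  rw [wedgeFinset]
  congr 1
  refine List.ext_getElem (by rw [List.length_map, Finset.length_sort, hlen]) ?_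
  intro i h1 h2
  rw [List.getElem_map]
  have hi : i < (S₀.sort (· ≤ ·)).length := by
    rw [Finset.length_sort, ← hlen]; exact h2
  have hmem : ((S₀.sort (· ≤ ·))[i]'hi) ∈ S₀ :=
    (Finset.mem_sort _).mp (List.getElem_mem _)
  have hidx : (S₀.sort (· ≤ ·)).idxOf ((S₀.sort (· ≤ ·))[i]'hi) = i :=
    List.Nodup.idxOf_getElem (Finset.sort_nodup _ _) i hi
  beta_reduce
  rw [dif_pos hmem]
  simp only [hidx]

end PolarProof


theorem polarSum_vanishing_iff_wedge_vanishing
    {V : Type*} [AddCommGroup V] [Module ℂ V] {r m k : ℕ}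
    (hr : 1 ≤ r) (hm : 1 ≤ m) (hV : finrank ℂ V = r * m)
    (w : Fin m → (⋀[ℂ]^r V : Submodule ℂ (ExteriorAlgebra ℂ V)))
    (hk1 : 1 ≤ k) (hkm : k ≤ m) :
    (∀ i ≤ k - 1, ∀ t : Fin m → (⋀[ℂ]^r V : Submodule ℂ (ExteriorAlgebra ℂ V)),
        polarSum w t i = 0) ↔
      ∀ S : Finset (Fin m), S.card = m - k + 1 →
        wedgeFinset (fun a => (w a : ExteriorAlgebra ℂ V)) S = 0 := by
  classical
  constructor
  · -- forward direction
    intro hpolar S hS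
    have hfin : Module.Finite ℂ V :=
      Module.finite_of_finrank_pos (by rw [hV]; exact Nat.mul_pos hr hm)
    let b : Basis (Fin (r * m)) ℂ V := (Module.finBasis ℂ V).reindex (finCongr hV)
    have hS₀card : (Sᶜ : Finset (Fin m)).card = k - 1 := by
      rw [Finset.card_compl, Fintype.card_fin, hS]; omega
    have hS₀c : (Sᶜ)ᶜ = S := compl_compl S
    -- step 1
    have step1 : ∀ t : Fin m → (⋀[ℂ]^r V : Submodule ℂ (ExteriorAlgebra ℂ V)),
        wedgeFinset (fun a => (w a : ExteriorAlgebra ℂ V)) S *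
          wedgeFinset (fun a => (t a : ExteriorAlgebra ℂ V)) Sᶜ = 0 := by
      intro t
      have hp := hpolar (k - 1) le_rfl (fun j => if j ∈ (Sᶜ : Finset (Fin m)) then t j else 0)
      rw [polarSum, Finset.sum_eq_single_of_mem Sᶜ
        (Finset.mem_powersetCard_univ.mpr hS₀card)] at hp
      · rw [hS₀c] at hp
        have hw0 : wedgeFinset
            (fun a => ((if a ∈ (Sᶜ : Finset (Fin m)) then t a else 0 :
              (⋀[ℂ]^r V : Submodule ℂ (ExteriorAlgebra ℂ V))) : ExteriorAlgebra ℂ V)) Sᶜ =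
            wedgeFinset (fun a => (t a : ExteriorAlgebra ℂ V)) Sᶜ := by
          rw [wedgeFinset, wedgeFinset]
          congr 1
          refine List.map_congr_left ?_
          intro j hj
          have hjm : j ∈ (Sᶜ : Finset (Fin m)) := (Finset.mem_sort _).mp hj
          simp [hjm]
        rw [hw0] at hp
        rcases Int.units_eq_one_or (Equiv.Perm.sign (sigmaPerm Sᶜ)) with hu | hu <;>
          rw [hu] at hp <;> simpa using hp
      · intro A hA hAS
        have hex : ∃ j ∈ A, j ∉ (Sᶜ : Finset (Fin m)) := by
          by_contra hcon
          push_neg at hcon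
          exact hAS (Finset.eq_of_subset_of_card_le hcon
            (by rw [hS₀card, Finset.mem_powersetCard_univ.mp hA]))
        obtain ⟨j, hjA, hjS⟩ := hex
        have hz : (0 : ExteriorAlgebra ℂ V) ∈ (A.sort (· ≤ ·)).map
            (fun a => ((if a ∈ (Sᶜ : Finset (Fin m)) then t a else 0 :
              (⋀[ℂ]^r V : Submodule ℂ (ExteriorAlgebra ℂ V))) : ExteriorAlgebra ℂ V)) :=
          List.mem_map.mpr ⟨j, (Finset.mem_sort _).mpr hjA, by simp [hjS]⟩
        have hzz : wedgeFinset
            (fun a => ((if a ∈ (Sᶜ : Finset (Fin m)) then t a else 0 :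
              (⋀[ℂ]^r V : Submodule ℂ (ExteriorAlgebra ℂ V))) : ExteriorAlgebra ℂ V)) A = 0 :=
          List.prod_eq_zero hz
        rw [hzz, mul_zero, smul_zero]
    -- step 2 : kill against everything of complementary degree
    have step2 : ∀ x ∈ ((PolarProof.pR (V := V)) ^ r) ^ ((Sᶜ : Finset (Fin m)).card),
        wedgeFinset (fun a => (w a : ExteriorAlgebra ℂ V)) S * x = 0 := by
      refine PolarProof.key_P r _ _ ?_
      intro l hl hlen
      obtain ⟨t, ht⟩ := PolarProof.wedge_list Sᶜ l hl hlen
      rw [← ht]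
      exact step1 t
    -- step 3 : nondegeneracy
    have hmem : wedgeFinset (fun a => (w a : ExteriorAlgebra ℂ V)) S ∈
        (PolarProof.pR (V := V)) ^ (r * (m - k + 1)) := by
      have := PolarProof.wedge_mem (fun a => (w a : ExteriorAlgebra ℂ V))
        (fun a => (w a).2) S
      rwa [hS] at this
    have hsplit : r * m = r * (m - k + 1) + r * (k - 1) := by
      rw [← Nat.mul_add]
      congr 1
      omega
    refine PolarProof.nondeg b (d := r * (m - k + 1)) (by omega) hmem ?_
    intro x hx
    have hcount : r * m - r * (m - k + 1) = r * (k - 1) := by omega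
    rw [hcount, pow_mul] at hx
    refine step2 x ?_
    rwa [hS₀card]
  · -- backward direction
    intro hzero i hi t
    rw [polarSum]
    refine Finset.sum_eq_zero ?_
    intro S hSmem
    have hcard : S.card = i := Finset.mem_powersetCard_univ.mp hSmem
    have h1 : wedgeFinset (fun a => (w a : ExteriorAlgebra ℂ V)) Sᶜ = 0 := by
      refine PolarProof.wedge_zero_of_all _ (by omega) hzero Sᶜ ?_
      rw [Finset.card_compl, Fintype.card_fin, hcard]
      omega
    rw [h1, zero_mul, smul_zero]
end

section
/- Let r ≥ 1, m ≥ 1 be integers, let V be a complex vector space of dimension rm, let w ∈ ⋀^r V, and let 1 ≤ k ≤ m. Then the following are equivalent: (a) for every i with 0 ≤ i ≤ k−1 and every (t_1,…,t_m) ∈ (⋀^r V)^m one has Σ_{S ⊆ M, |S| = i} sgn(σ_S) · w^{∧(m−i)} ∧ t_S = 0 in ⋀^{rm} V; (b) w^{∧(m−k+1)} = 0, where w^{∧j} denotes the j-fold wedge product w ∧ ⋯ ∧ w. -/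
open Module ExteriorAlgebra

section Helpers

variable {V : Type*} [AddCommGroup V] [Module ℂ V]


lemma iotaMulti_mul {a b : ℕ} (v : Fin a → V) (u : Fin b → V) :
    ιMulti ℂ a v * ιMulti ℂ b u = ιMulti ℂ (a + b) (Fin.append v u) := by
  rw [ιMulti_apply, ιMulti_apply, ιMulti_apply]
  have : (fun i => ι ℂ (Fin.append v u i)) = Fin.append (fun i => ι ℂ (v i)) (fun i => ι ℂ (u i)) := by
    funext i
    refine Fin.addCases (fun i => ?_) (fun i => ?_) i <;>
      simp [Fin.append_left, Fin.append_right]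
  rw [this, List.ofFn_fin_append, List.prod_append]

lemma iotaMulti_comp_ne_zero {n : ℕ} (b : Basis (Fin n) ℂ V) (f : Fin n → Fin n)
    (hf : Function.Injective f) : ιMulti ℂ n (fun i => b (f i)) ≠ 0 := by
  classical
  set F : ∀ i, V [⋀^Fin i]→ₗ[ℂ] ℂ := fun i =>
    if h : n = i then AlternatingMap.domDomCongr (finCongr h) b.det else 0 with hF
  intro hzero
  have h1 : liftAlternating F (ιMulti ℂ n (fun i => b (f i))) = 0 := by rw [hzero]; simp
  rw [liftAlternating_apply_ιMulti] at h1
  have h2 : F n = AlternatingMap.domDomCongr (finCongr rfl) b.det := by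
    rw [hF]; simp
  rw [h2] at h1
  have h3 : b.det ((fun i => b (f i)) ∘ (finCongr (rfl : n = n)).symm) = 0 := h1
  have hbij : Function.Bijective f := (Finite.injective_iff_bijective).1 hf
  set π : Equiv.Perm (Fin n) := Equiv.ofBijective f hbij with hπ
  have h4 : ((fun i => b (f i)) ∘ (finCongr (rfl : n = n)).symm) = (⇑b) ∘ ⇑π := by
    funext i; simp [hπ, Equiv.ofBijective]
  rw [h4, AlternatingMap.map_perm, Basis.det_self] at h3
  rcases Int.units_eq_one_or (Equiv.Perm.sign π) with h | h <;> rw [h] at h3 <;>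
    simp at h3

lemma exteriorPower_le_span {n : ℕ} (b : Basis (Fin n) ℂ V) (p : ℕ) :
    (⋀[ℂ]^p V : Submodule ℂ (ExteriorAlgebra ℂ V)) ≤ Submodule.span ℂ
      (Set.range fun s : {s : Finset (Fin n) // s.card = p} =>
        ιMulti ℂ p fun i => b ((s.1.orderIsoOfFin s.2 i : Fin n))) := by
  classical
  rw [← ιMulti_span_fixedDegree]
  rw [Submodule.span_le]
  rintro _ ⟨v, rfl⟩
  have hv : v = fun j => ∑ i : Fin n, b.repr (v j) i • b i := by
    funext j; exact (b.sum_repr (v j)).symm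
  rw [hv]
  have hexp := MultilinearMap.map_sum (ιMulti ℂ p (M := V)).toMultilinearMap
      (g := fun j i => b.repr (v j) i • b i)
  have : ιMulti ℂ p (fun j => ∑ i : Fin n, b.repr (v j) i • b i)
      = ∑ r : Fin p → Fin n, ιMulti ℂ p fun j => b.repr (v j) (r j) • b (r j) := hexp
  rw [this]
  apply Submodule.sum_mem
  intro r _
  have hsm : ιMulti ℂ p (fun j => b.repr (v j) (r j) • b (r j))
      = (∏ j, b.repr (v j) (r j)) • ιMulti ℂ p (fun j => b (r j)) :=
    MultilinearMap.map_smul_univ (ιMulti ℂ p (M := V)).toMultilinearMap _ _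
  rw [hsm]
  apply Submodule.smul_mem
  by_cases hr : Function.Injective r
  · -- image set
    set s : Finset (Fin n) := Finset.image r Finset.univ with hs
    have hcard : s.card = p := by
      rw [hs, Finset.card_image_of_injective _ hr, Finset.card_univ, Fintype.card_fin]
    set π : Fin p → Fin p := fun j => (s.orderIsoOfFin hcard).symm
      ⟨r j, by rw [hs]; exact Finset.mem_image_of_mem _ (Finset.mem_univ j)⟩ with hπ
    have hπinj : Function.Injective π := by
      intro a c h
      have h2 := congrArg (fun x => ((s.orderIsoOfFin hcard) x : Fin n)) h
      simp only [hπ, OrderIso.apply_symm_apply] at h2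
      exact hr h2
    set πe : Equiv.Perm (Fin p) := Equiv.ofBijective π ((Finite.injective_iff_bijective).1 hπinj)
    have hcomp : (fun j => b (r j)) = (fun i => b ((s.orderIsoOfFin hcard i : Fin n))) ∘ ⇑πe := by
      funext j
      have : ((s.orderIsoOfFin hcard) (π j) : Fin n) = r j := by
        rw [hπ]; simp
      simp only [Function.comp_apply]
      rw [show πe j = π j from rfl, this]
    rw [hcomp, AlternatingMap.map_perm]
    apply Submodule.smul_mem
    exact Submodule.subset_span ⟨⟨s, hcard⟩, rfl⟩
  · -- not injective: zero
    rw [Function.not_injective_iff] at hr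
    obtain ⟨a, c, hac, hacne⟩ := hr
    rw [AlternatingMap.map_eq_zero_of_eq _ _ (by rw [hac]) hacne]
    exact Submodule.zero_mem _

lemma smul_eq_zero_helper {c : ℂ} {x : ExteriorAlgebra ℂ V} (h : c • x = 0) (hx : x ≠ 0) : c = 0 := by
  by_contra hc
  exact hx (by rw [← inv_smul_smul₀ hc x, h, smul_zero])

lemma sign_smul_ne_zero {x : ExteriorAlgebra ℂ V} (hx : x ≠ 0) (u : ℤˣ) : (u : ℤˣ) • x ≠ 0 := by
  rcases Int.units_eq_one_or u with h | h <;> rw [h] <;> simpa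

lemma top_pairing_nondeg {p q : ℕ} (b : Basis (Fin (p + q)) ℂ V)
    (z : (ExteriorAlgebra ℂ V)) (hz : z ∈ (⋀[ℂ]^p V : Submodule ℂ (ExteriorAlgebra ℂ V)))
    (h : ∀ y ∈ (⋀[ℂ]^q V : Submodule ℂ (ExteriorAlgebra ℂ V)), z * y = 0) : z = 0 := by
  classical
  obtain ⟨c, hc⟩ := (Submodule.mem_span_range_iff_exists_fun ℂ).1 (exteriorPower_le_span b p hz)
  have key : ∀ s₀ : {s : Finset (Fin (p + q)) // s.card = p}, c s₀ = 0 := by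
    intro s₀
    have hcomp : (s₀.1ᶜ).card = q := by
      rw [Finset.card_compl, s₀.2]
      simp
    set g : Fin q → Fin (p + q) := fun j => ((s₀.1ᶜ).orderIsoOfFin hcomp j : Fin (p + q)) with hg
    set y  : ExteriorAlgebra ℂ V := ιMulti ℂ q fun j => b (g j) with hy
    have hymem : y ∈ (⋀[ℂ]^q V : Submodule ℂ (ExteriorAlgebra ℂ V)) := ιMulti_range ℂ q ⟨_, rfl⟩
    have h0 : z * y = 0 := h y hymem
    rw [← hc, Finset.sum_mul] at h0
    -- each term
    have hterm : ∀ s : {s : Finset (Fin (p + q)) // s.card = p}, s ≠ s₀ →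
        (c s • ιMulti ℂ p fun i => b ((s.1.orderIsoOfFin s.2 i : Fin (p + q)))) * y = 0 := by
      intro s hs
      have hnsub : ¬ s.1 ⊆ s₀.1 := by
        intro hsub
        exact hs (Subtype.ext (Finset.eq_of_subset_of_card_le hsub (by rw [s.2, s₀.2])))
      obtain ⟨a, ha, hha⟩ := Finset.not_subset.1 hnsub
      rw [smul_mul_assoc, hy, iotaMulti_mul]
      set i : Fin p := (s.1.orderIsoOfFin s.2).symm ⟨a, ha⟩ with hi
      set j : Fin q := ((s₀.1ᶜ).orderIsoOfFin hcomp).symm ⟨a, Finset.mem_compl.2 hha⟩ with hj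
      have heq : Fin.append (fun i => b ((s.1.orderIsoOfFin s.2 i : Fin (p + q))))
          (fun j => b (g j)) (Fin.castAdd q i)
          = Fin.append (fun i => b ((s.1.orderIsoOfFin s.2 i : Fin (p + q))))
          (fun j => b (g j)) (Fin.natAdd p j) := by
        rw [Fin.append_left, Fin.append_right, hi, hg, hj]
        simp
      rw [AlternatingMap.map_eq_zero_of_eq _ _ heq
        (by simp [Fin.ext_iff, Nat.ne_of_lt (lt_of_lt_of_le i.2 (Nat.le_add_right p j.1))]),
        smul_zero]
    rw [Finset.sum_eq_single s₀ (fun s _ hs => hterm s hs) (by simp)] at h0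
    rw [smul_mul_assoc, hy, iotaMulti_mul] at h0
    set F : Fin (p + q) → Fin (p + q) := Fin.append
      (fun i => ((s₀.1.orderIsoOfFin s₀.2 i : Fin (p + q)))) g with hFdef
    have happ : Fin.append (fun i => b ((s₀.1.orderIsoOfFin s₀.2 i : Fin (p + q))))
        (fun j => b (g j)) = fun i => b (F i) := by
      funext i
      refine Fin.addCases (fun i => ?_) (fun i => ?_) i <;>
        simp [hFdef, Fin.append_left, Fin.append_right]
    have hFinj : Function.Injective F := by
      intro i j hij
      have hmem : ∀ i : Fin (p + q), (F i ∈ s₀.1 ∧ ∃ i', i = Fin.castAdd q i' ∧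
          F i = (s₀.1.orderIsoOfFin s₀.2 i' : Fin (p+q))) ∨ (F i ∈ s₀.1ᶜ ∧ ∃ j', i = Fin.natAdd p j' ∧
          F i = ((s₀.1ᶜ).orderIsoOfFin hcomp j' : Fin (p+q))) := by
        intro i
        refine Fin.addCases (fun i => Or.inl ?_) (fun j => Or.inr ?_) i
        · rw [hFdef, Fin.append_left]; exact ⟨Finset.coe_mem _, i, rfl, rfl⟩
        · rw [hFdef, Fin.append_right, hg]; exact ⟨Finset.coe_mem _, j, rfl, rfl⟩
      rcases hmem i with ⟨hm, i', rfl, hFi⟩ | ⟨hm, i', rfl, hFi⟩ <;>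
        rcases hmem j with ⟨hm', j', rfl, hFj⟩ | ⟨hm', j', rfl, hFj⟩
      · congr 1
        have := hFi.symm.trans (hij.trans hFj)
        exact (s₀.1.orderIsoOfFin s₀.2).injective (Subtype.ext this)
      · rw [hij] at hm; exact absurd hm' (by simpa using hm)
      · rw [hij] at hm; exact absurd hm (by simpa using hm')
      · congr 1
        have := hFi.symm.trans (hij.trans hFj)
        exact ((s₀.1ᶜ).orderIsoOfFin hcomp).injective (Subtype.ext this)
    rw [happ] at h0
    exact smul_eq_zero_helper h0 (iotaMulti_comp_ne_zero b F hFinj)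
  rw [← hc]
  simp [key]

lemma pow_le_span_listProd {A : Type*} [Ring A] [Algebra ℂ A] (N : Submodule ℂ A) :
    ∀ j : ℕ, (N ^ j : Submodule ℂ A) ≤ Submodule.span ℂ
      {u | ∃ x : Fin j → N, u = (List.ofFn fun i => (x i : A)).prod} := by
  intro j
  induction j with
  | zero =>
    rw [pow_zero, Submodule.one_eq_span]
    apply Submodule.span_le.2
    rintro _ (rfl : _ = (1 : A))
    exact Submodule.subset_span ⟨fun i => 0, by simp⟩
  | succ j ih =>
    rw [pow_succ]
    intro y hy
    refine Submodule.mul_induction_on hy ?_ (fun x y hx hy => Submodule.add_mem _ hx hy)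
    intro a ha bb hb
    have ha' := ih ha
    have gen : ∀ u ∈ {u | ∃ x : Fin j → N, u = (List.ofFn fun i => (x i : A)).prod},
        u * bb ∈ Submodule.span ℂ
          {u | ∃ x : Fin (j + 1) → N, u = (List.ofFn fun i => (x i : A)).prod} := by
      rintro _ ⟨x, rfl⟩
      set x' : Fin (j + 1) → N := Fin.snoc x ⟨bb, hb⟩ with hx'
      refine Submodule.subset_span ⟨x', ?_⟩
      have : (List.ofFn fun i : Fin (j+1) => ((x' i : N) : A))
          = (List.ofFn fun i : Fin j => ((x i : N) : A)).concat bb := by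
        rw [List.ofFn_succ']
        congr 1
        · rw [hx']; simp
        · rw [hx']; simp
      rw [this, List.concat_eq_append, List.prod_append]
      simp
    refine Submodule.span_induction (p := fun u _ => u * bb ∈ Submodule.span ℂ
        {u | ∃ x : Fin (j + 1) → N, u = (List.ofFn fun i => (x i : A)).prod})
      (fun u hu => gen u hu) (by simp) ?_ ?_ ha'
    · intro u v _ _ h1 h2
      show (u + v) * bb ∈ _
      rw [add_mul]
      exact Submodule.add_mem _ h1 h2
    · intro c u _ h1
      show (c • u) * bb ∈ _
      rw [smul_mul_assoc]
      exact Submodule.smul_mem _ _ h1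


lemma wedgeFinset_eq_ofFn {m k' : ℕ} (f : Fin m → ExteriorAlgebra ℂ V) (S : Finset (Fin m))
    (hS : S.card = k') :
    wedgeFinset f S = (List.ofFn fun i : Fin k' => f ((S.orderIsoOfFin hS i : Fin m))).prod := by
  unfold wedgeFinset
  have h1 : S.sort (· ≤ ·) = List.ofFn (fun i : Fin k' => ((S.orderIsoOfFin hS i : Fin m))) := by
    apply List.ext_getElem
    · simp [hS]
    · intro n hn1 hn2
      simp [Finset.coe_orderIsoOfFin_apply, Finset.orderEmbOfFin_apply]
  rw [h1, List.map_ofFn]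
  rfl

lemma wedgeFinset_dite {m k' r : ℕ} (S : Finset (Fin m)) (hS : S.card = k')
    (x : Fin k' → (⋀[ℂ]^r V : Submodule ℂ (ExteriorAlgebra ℂ V))) :
    wedgeFinset (fun a => ((if h : a ∈ S then x ((S.orderIsoOfFin hS).symm ⟨a, h⟩)
        else 0 : (⋀[ℂ]^r V : Submodule ℂ (ExteriorAlgebra ℂ V))) : ExteriorAlgebra ℂ V)) S
      = (List.ofFn fun i => ((x i : ExteriorAlgebra ℂ V))).prod := by
  rw [wedgeFinset_eq_ofFn _ S hS]
  congr 1
  rw [List.ofFn_inj]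
  funext i
  rw [dif_pos (Finset.coe_mem _)]
  have : (S.orderIsoOfFin hS).symm ⟨(S.orderIsoOfFin hS i : Fin m), Finset.coe_mem _⟩ = i := by
    have : (⟨(S.orderIsoOfFin hS i : Fin m), Finset.coe_mem _⟩ : {a // a ∈ S})
        = S.orderIsoOfFin hS i := rfl
    rw [this, OrderIso.symm_apply_apply]
  rw [this]

lemma wedgeFinset_eq_zero {m : ℕ} (f : Fin m → ExteriorAlgebra ℂ V) (S : Finset (Fin m))
    {a : Fin m} (ha : a ∈ S) (hfa : f a = 0) : wedgeFinset f S = 0 := by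
  apply List.prod_eq_zero
  rw [List.mem_map]
  exact ⟨a, (Finset.mem_sort _).2 ha, hfa⟩

end Helpers

theorem diagonal_polarSum_vanishing_iff_pow_zero
    {V : Type*} [AddCommGroup V] [Module ℂ V] {r m k : ℕ}
    (hr : 1 ≤ r) (hm : 1 ≤ m) (hV : finrank ℂ V = r * m)
    (w : (⋀[ℂ]^r V : Submodule ℂ (ExteriorAlgebra ℂ V)))
    (hk1 : 1 ≤ k) (hkm : k ≤ m) :
    (∀ i ≤ k - 1, ∀ t : Fin m → (⋀[ℂ]^r V : Submodule ℂ (ExteriorAlgebra ℂ V)),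
        (∑ S ∈ Finset.powersetCard i (Finset.univ : Finset (Fin m)),
          (Equiv.Perm.sign (sigmaPerm S) : ℤ) •
            ((w : ExteriorAlgebra ℂ V) ^ (m - i) *
              wedgeFinset (fun a => (t a : ExteriorAlgebra ℂ V)) S)) = 0) ↔
      (w : ExteriorAlgebra ℂ V) ^ (m - k + 1) = 0 := by
  classical
  have hfin : FiniteDimensional ℂ V :=
    FiniteDimensional.of_finrank_pos (by rw [hV]; exact Nat.mul_pos hr hm)
  constructor
  · intro H
    have hpq : r * (m - k + 1) + r * (k - 1) = r * m := by
      rw [← Nat.mul_add]; congr 1; omega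
    let b : Basis (Fin (r * (m - k + 1) + r * (k - 1))) ℂ V :=
      (Module.finBasis ℂ V).reindex (finCongr (by rw [hV, hpq]))
    set z : ExteriorAlgebra ℂ V := (w : ExteriorAlgebra ℂ V) ^ (m - k + 1) with hz
    have hzmem : z ∈ (⋀[ℂ]^(r * (m - k + 1)) V : Submodule ℂ (ExteriorAlgebra ℂ V)) := by
      show z ∈ (LinearMap.range (ι ℂ (M := V)) ^ (r * (m - k + 1)))
      rw [pow_mul]
      exact Submodule.pow_mem_pow _ w.2 _
    have stepA : ∀ x : Fin (k - 1) → (⋀[ℂ]^r V : Submodule ℂ (ExteriorAlgebra ℂ V)),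
        z * (List.ofFn fun i => ((x i : ExteriorAlgebra ℂ V))).prod = 0 := by
      intro x
      obtain ⟨S₀, -, hS₀⟩ := Finset.exists_subset_card_eq
        (s := (Finset.univ : Finset (Fin m))) (n := k - 1) (by simp; omega)
      set t : Fin m → (⋀[ℂ]^r V : Submodule ℂ (ExteriorAlgebra ℂ V)) := fun a =>
        if h : a ∈ S₀ then x ((S₀.orderIsoOfFin hS₀).symm ⟨a, h⟩) else 0 with ht
      have hH := H (k - 1) le_rfl t
      rw [Finset.sum_eq_single S₀] at hH
      · rw [wedgeFinset_dite S₀ hS₀ x] at hH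
        have hmk : m - (k - 1) = m - k + 1 := by omega
        rw [hmk] at hH
        rcases Int.units_eq_one_or (Equiv.Perm.sign (sigmaPerm S₀)) with h | h <;>
          rw [h] at hH
        · simpa using hH
        · rw [show (((-1 : ℤˣ) : ℤ)) = (-1 : ℤ) from rfl, neg_smul, one_smul,
            neg_eq_zero] at hH
          exact hH
      · intro S hS hne
        have hcard : S.card = k - 1 := (Finset.mem_powersetCard_univ).1 hS
        have hnsub : ¬ S ⊆ S₀ := fun hsub =>
          hne (Finset.eq_of_subset_of_card_le hsub (by rw [hcard, hS₀]))
        obtain ⟨a, ha, hha⟩ := Finset.not_subset.1 hnsub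
        rw [wedgeFinset_eq_zero _ S ha (by rw [ht]; simp [hha]), mul_zero, smul_zero]
      · intro hS₀mem
        exact absurd ((Finset.mem_powersetCard_univ).2 hS₀) hS₀mem
    have stepB : ∀ y ∈ (⋀[ℂ]^(r * (k - 1)) V : Submodule ℂ (ExteriorAlgebra ℂ V)),
        z * y = 0 := by
      intro y hy
      have hy' : y ∈ ((⋀[ℂ]^r V : Submodule ℂ (ExteriorAlgebra ℂ V)) ^ (k - 1)) := by
        rw [← pow_mul]
        exact hy
      have hspan := pow_le_span_listProd
        (⋀[ℂ]^r V : Submodule ℂ (ExteriorAlgebra ℂ V)) (k - 1) hy'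
      refine Submodule.span_induction (p := fun y _ => z * y = 0) ?_ (by show z * (0 : ExteriorAlgebra ℂ V) = 0; rw [mul_zero]) ?_ ?_ hspan
      · rintro _ ⟨x, rfl⟩
        exact stepA x
      · intro u v _ _ h1 h2
        show z * (u + v) = 0
        rw [mul_add, h1, h2, add_zero]
      · intro c u _ h1
        show z * (c • u) = 0
        rw [mul_smul_comm, h1, smul_zero]
    exact top_pairing_nondeg b z hzmem stepB
  · intro h i hi t
    apply Finset.sum_eq_zero
    intro S hS
    have hw : (w : ExteriorAlgebra ℂ V) ^ (m - i) = 0 := by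
      have hmi : m - i = (m - k + 1) + (k - 1 - i) := by omega
      rw [hmi, pow_add, h, zero_mul]
    rw [hw, zero_mul, smul_zero]
end

section
/- Let r ≥ 1, m ≥ 1 be integers, let V be a complex vector space of dimension rm, and let w_1,…,w_m ∈ ⋀^r V all be nonzero. Then there exist an integer i with 0 ≤ i ≤ m−1 and a tuple (t_1,…,t_m) ∈ (⋀^r V)^m such that Σ_{S ⊆ M, |S| = i} sgn(σ_S) · w_{M∖S} ∧ t_S ≠ 0 in ⋀^{rm} V. (In other words, the Plücker form 𝔻_{r,m} has no point of multiplicity ≥ m.) -/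
open Module ExteriorAlgebra

section Aux

variable {V : Type*} [AddCommGroup V] [Module ℂ V]

section aux
variable {n : ℕ} (b : Basis (Fin n) ℂ V)

/-- The wedge product of basis vectors indexed by a list. -/
noncomputable def eList (L : List (Fin n)) : ExteriorAlgebra ℂ V :=
  (L.map (fun j => ExteriorAlgebra.ι ℂ (b j))).prod

lemma eList_append (L₁ L₂ : List (Fin n)) :
    eList b (L₁ ++ L₂) = eList b L₁ * eList b L₂ := by
  simp [eList]

lemma eList_eq_iMulti {k : ℕ} (L : List (Fin n)) (h : L.length = k) :
    eList b L = ιMulti ℂ k (fun i => b (L.get (Fin.cast h.symm i))) := by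
  subst h
  rw [ιMulti_apply, eList]
  rw [← List.ofFn_get L, List.map_ofFn, List.ofFn_get]
  rfl

lemma eList_mem (L : List (Fin n)) : eList b L ∈ ⋀[ℂ]^(L.length) V := by
  rw [← ιMulti_span_fixedDegree]
  exact Submodule.subset_span ⟨_, (eList_eq_iMulti b L rfl).symm⟩

lemma eList_of_not_nodup (L : List (Fin n)) (h : ¬ L.Nodup) : eList b L = 0 := by
  rw [eList_eq_iMulti b L rfl]
  rw [List.nodup_iff_injective_get] at h
  simp only [Function.Injective, not_forall] at h
  obtain ⟨i, j, hij, hne⟩ := h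
  exact AlternatingMap.map_eq_zero_of_eq _ (i := Fin.cast rfl i) (j := Fin.cast rfl j) _
    (congrArg b hij) (by simpa using hne)

/-- The wedge of the basis vectors in a finset, in increasing order. -/
noncomputable def eFin (A : Finset (Fin n)) : ExteriorAlgebra ℂ V :=
  eList b (A.sort (· ≤ ·))

lemma eFin_mem (A : Finset (Fin n)) : eFin b A ∈ ⋀[ℂ]^(A.card) V := by
  have := eList_mem b (A.sort (· ≤ ·))
  rwa [Finset.length_sort] at this

/-- The top-degree functional: lift of `b.det`. -/
noncomputable def Dtop : ExteriorAlgebra ℂ V →ₗ[ℂ] ℂ :=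
  liftAlternating (Function.update (fun i => (0 : V [⋀^Fin i]→ₗ[ℂ] ℂ)) n b.det)

lemma Dtop_eList (L : List (Fin n)) (h : L.length = n) :
    Dtop b (eList b L) = b.det (fun i => b (L.get (Fin.cast h.symm i))) := by
  rw [eList_eq_iMulti b L h, Dtop, liftAlternating_apply_ιMulti, Function.update_self]

lemma Dtop_eList_ne_zero (L : List (Fin n)) (h : L.length = n) (hd : L.Nodup) :
    Dtop b (eList b L) ≠ 0 := by
  rw [Dtop_eList b L h]
  have hinj : Function.Injective (fun i : Fin n => L.get (Fin.cast h.symm i)) := by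
    intro i j hij
    rw [List.nodup_iff_injective_get] at hd
    have := hd hij
    exact Fin.cast_injective _ this
  have hbij := (Finite.injective_iff_bijective).mp hinj
  set σ : Equiv.Perm (Fin n) := Equiv.ofBijective _ hbij with hσ
  have : (fun i : Fin n => b (L.get (Fin.cast h.symm i))) = ⇑b ∘ ⇑σ := rfl
  rw [this, AlternatingMap.map_perm, Basis.det_self]
  rcases Int.units_eq_one_or (Equiv.Perm.sign σ) with hs | hs <;> rw [hs] <;> norm_num
end aux

section span
variable {n : ℕ} (b : Basis (Fin n) ℂ V)

lemma iMulti_basis_mem_span (k : ℕ) (f : Fin k → Fin n)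
    (g : Finset (Fin n) → ExteriorAlgebra ℂ V)
    (hg : ∀ A : Finset (Fin n), A.card = k → g A = eFin b A) :
    ιMulti ℂ k (fun i => b (f i)) ∈ Submodule.span ℂ (Set.range g) := by
  by_cases hf : Function.Injective f
  · set A : Finset (Fin n) := Finset.image f Finset.univ with hA
    have hAcard : A.card = k := by
      rw [hA, Finset.card_image_of_injective _ hf, Finset.card_univ, Fintype.card_fin]
    set L : List (Fin n) := A.sort (· ≤ ·) with hL
    have hLlen : L.length = k := by rw [hL, Finset.length_sort, hAcard]
    set u : Fin k → Fin n := fun i => L.get (Fin.cast hLlen.symm i) with hu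
    have hunj : Function.Injective u := by
      intro i j hij
      have hd := Finset.sort_nodup A (· ≤ ·)
      rw [List.nodup_iff_injective_get] at hd
      exact Fin.cast_injective _ (hd hij)
    have himu : Finset.image u Finset.univ = A := by
      apply Finset.eq_of_subset_of_card_le
      · intro x hx
        simp only [Finset.mem_image] at hx
        obtain ⟨i, -, rfl⟩ := hx
        have : u i ∈ L := by rw [hu]; exact List.get_mem L _
        rwa [hL, Finset.mem_sort] at this
      · rw [hAcard, Finset.card_image_of_injective _ hunj, Finset.card_univ,
          Fintype.card_fin]
    have hrange : Set.range f = Set.range u := by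
      rw [← Set.image_univ, ← Set.image_univ, ← Finset.coe_univ, ← Finset.coe_image,
        ← Finset.coe_image, himu, hA]
    set σ : Equiv.Perm (Fin k) :=
      (Equiv.ofInjective f hf).trans ((Equiv.setCongr hrange).trans
        (Equiv.ofInjective u hunj).symm) with hσ
    have hfu : ∀ i, f i = u (σ i) := by
      intro i
      rw [hσ]
      simp only [Equiv.trans_apply, Equiv.setCongr_apply]
      rw [Equiv.apply_ofInjective_symm hunj]
      rfl
    have h1 : (fun i => b (f i)) = (fun i => b (u i)) ∘ ⇑σ := by
      funext i; simp [hfu i]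
    rw [h1, AlternatingMap.map_perm]
    have h2 : ιMulti ℂ k (fun i => b (u i)) ∈ Submodule.span ℂ (Set.range g) := by
      have : ιMulti ℂ k (fun i => b (u i)) = g A := by
        rw [hg A hAcard, eFin, eList_eq_iMulti b L hLlen]
      rw [this]
      exact Submodule.subset_span ⟨A, rfl⟩
    rcases Int.units_eq_one_or (Equiv.Perm.sign σ) with hs | hs <;> rw [hs]
    · simpa using h2
    · simpa using Submodule.neg_mem _ h2
  · rw [AlternatingMap.map_eq_zero_of_not_injective _ _ (fun h => hf (fun i j hij => by
      exact h (congrArg b hij)))]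
    exact Submodule.zero_mem _

lemma exteriorPower_eq_combination (k : ℕ) (x : ExteriorAlgebra ℂ V)
    (hx : x ∈ ⋀[ℂ]^k V) :
    ∃ c : Finset (Fin n) → ℂ,
      x = ∑ A ∈ Finset.powersetCard k (Finset.univ : Finset (Fin n)), c A • eFin b A := by
  classical
  set g : Finset (Fin n) → ExteriorAlgebra ℂ V :=
    fun A => if A.card = k then eFin b A else 0 with hgdef
  have hg : ∀ A : Finset (Fin n), A.card = k → g A = eFin b A := by
    intro A hA; simp [hgdef, hA]
  have hspan : x ∈ Submodule.span ℂ (Set.range g) := by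
    revert x
    rw [← SetLike.le_def, ← ιMulti_span_fixedDegree, Submodule.span_le]
    rintro _ ⟨v, rfl⟩
    have hv : v = fun i => ∑ j, b.repr (v i) j • b j := by
      funext i; rw [b.sum_repr (v i)]
    rw [show (ιMulti ℂ k v : ExteriorAlgebra ℂ V)
        = (ιMulti ℂ k).toMultilinearMap (fun i => ∑ j, b.repr (v i) j • b j) by
      rw [← hv]; rfl]
    rw [MultilinearMap.map_sum]
    apply Submodule.sum_mem
    intro f _
    have : ((ιMulti ℂ k).toMultilinearMap fun i => b.repr (v i) (f i) • b (f i))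
        = (∏ i, b.repr (v i) (f i)) • ιMulti ℂ k (fun i => b (f i)) := by
      rw [MultilinearMap.map_smul_univ]; rfl
    rw [this]
    exact Submodule.smul_mem _ _ (iMulti_basis_mem_span b k f g hg)
  rw [Submodule.mem_span_range_iff_exists_fun] at hspan
  obtain ⟨c, hc⟩ := hspan
  refine ⟨c, ?_⟩
  rw [← hc]
  rw [← Finset.sum_subset (Finset.subset_univ (Finset.powersetCard k Finset.univ))
    (fun A _ hA => by
      rw [Finset.mem_powersetCard_univ] at hA; simp [hgdef, hA])]
  exact (Finset.sum_congr rfl fun A hA => by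
    rw [hg A (Finset.mem_powersetCard_univ.mp hA)]).symm

lemma exists_compl_wedge_ne_zero (k : ℕ) (x : ExteriorAlgebra ℂ V)
    (hx : x ∈ ⋀[ℂ]^k V) (hx0 : x ≠ 0) :
    ∃ A : Finset (Fin n), A.card = k ∧ x * eFin b Aᶜ ≠ 0 := by
  classical
  by_contra hcon
  push_neg at hcon
  obtain ⟨c, hc⟩ := exteriorPower_eq_combination b k x hx
  have hzero : ∀ A₀ ∈ Finset.powersetCard k (Finset.univ : Finset (Fin n)), c A₀ = 0 := by
    intro A₀ hA₀
    have hA₀c : A₀.card = k := Finset.mem_powersetCard_univ.mp hA₀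
    have h0 : Dtop b (x * eFin b A₀ᶜ) = 0 := by rw [hcon A₀ hA₀c, map_zero]
    rw [hc, Finset.sum_mul, map_sum] at h0
    have hterm : ∀ A ∈ Finset.powersetCard k (Finset.univ : Finset (Fin n)),
        Dtop b (c A • eFin b A * eFin b A₀ᶜ)
          = c A • Dtop b (eList b (A.sort (· ≤ ·) ++ A₀ᶜ.sort (· ≤ ·))) := by
      intro A _
      rw [smul_mul_assoc, map_smul, eList_append, eFin, eFin]
    rw [Finset.sum_congr rfl hterm] at h0
    have hoff : ∀ A ∈ Finset.powersetCard k (Finset.univ : Finset (Fin n)), A ≠ A₀ →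
        c A • Dtop b (eList b (A.sort (· ≤ ·) ++ A₀ᶜ.sort (· ≤ ·))) = 0 := by
      intro A hA hne
      have hAc : A.card = k := Finset.mem_powersetCard_univ.mp hA
      have : ¬ (A.sort (· ≤ ·) ++ A₀ᶜ.sort (· ≤ ·)).Nodup := by
        intro hnd
        rw [List.nodup_append] at hnd
        obtain ⟨j, hjA, hjA₀⟩ : ∃ j, j ∈ A ∧ j ∉ A₀ := by
          by_contra hsub
          push_neg at hsub
          exact hne (Finset.eq_of_subset_of_card_le hsub (by rw [hAc, hA₀c]))
        exact hnd.2.2 j (by rwa [Finset.mem_sort])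
          j (by rw [Finset.mem_sort]; simpa using hjA₀) rfl
      rw [eList_of_not_nodup b _ this, map_zero, smul_zero]
    rw [Finset.sum_eq_single_of_mem A₀ hA₀ hoff] at h0
    have hlen : (A₀.sort (· ≤ ·) ++ A₀ᶜ.sort (· ≤ ·)).length = n := by
      simp [Finset.length_sort, hA₀c]
      rw [Finset.card_compl, hA₀c]
      have : k ≤ n := by
        calc k = A₀.card := hA₀c.symm
        _ ≤ Fintype.card (Fin n) := A₀.card_le_univ
        _ = n := Fintype.card_fin n
      simp [Fintype.card_fin]
      omega
    have hnd : (A₀.sort (· ≤ ·) ++ A₀ᶜ.sort (· ≤ ·)).Nodup := by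
      rw [List.nodup_append]
      refine ⟨Finset.sort_nodup _ _, Finset.sort_nodup _ _, ?_⟩
      intro a ha a' ha' hEq
      rw [Finset.mem_sort] at ha ha'
      simp at ha'
      exact ha' (hEq ▸ ha)
    have := Dtop_eList_ne_zero b _ hlen hnd
    exact (smul_eq_zero.mp h0).resolve_right this
  exact hx0 (by rw [hc]; exact Finset.sum_eq_zero fun A hA => by rw [hzero A hA, zero_smul])
end span

lemma join_blocks {α : Type*} (r : ℕ) :
    ∀ (q : ℕ) (L : List α), L.length = r * q →
      (List.ofFn fun i : Fin q => ((L.drop (r * (i : ℕ))).take r)).flatten = L := by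
  intro q
  induction q with
  | zero => intro L hL; simp at hL; simp [hL]
  | succ q ih =>
    intro L hL
    rw [List.ofFn_succ, List.flatten_cons]
    have h1 : ∀ i : Fin q, ((L.drop (r * ((i.succ : Fin (q+1)) : ℕ))).take r)
        = (((L.drop r).drop (r * (i : ℕ))).take r) := by
      intro i
      rw [List.drop_drop]
      congr 1
      simp [Fin.val_succ]
      ring_nf
    simp only [h1]
    rw [ih (L.drop r) (by rw [List.length_drop, hL]; ring_nf; omega)]
    simp

lemma eList_join {n : ℕ} (b : Basis (Fin n) ℂ V) (l : List (List (Fin n))) :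
    eList b l.flatten = (l.map (eList b)).prod := by
  induction l with
  | nil => simp [eList]
  | cons hd tl ih => rw [List.flatten_cons, eList_append, ih, List.map_cons, List.prod_cons]


end Aux

theorem exists_polarSum_ne_zero_of_ne_zero
    {V : Type*} [AddCommGroup V] [Module ℂ V] {r m : ℕ}
    (hr : 1 ≤ r) (hm : 1 ≤ m) (hV : finrank ℂ V = r * m)
    (w : Fin m → (⋀[ℂ]^r V : Submodule ℂ (ExteriorAlgebra ℂ V)))
    (hw : ∀ s, w s ≠ 0) :
    ∃ i ≤ m - 1, ∃ t : Fin m → (⋀[ℂ]^r V : Submodule ℂ (ExteriorAlgebra ℂ V)),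
      polarSum w t i ≠ 0 := by
  classical
  have hfd : FiniteDimensional ℂ V :=
    FiniteDimensional.of_finrank_pos (by rw [hV]; positivity)
  let b : Basis (Fin (r * m)) ℂ V := (Module.finBasis ℂ V).reindex (finCongr hV)
  set z : Fin m := ⟨0, hm⟩ with hz
  set x : ExteriorAlgebra ℂ V := (w z : ExteriorAlgebra ℂ V) with hxdef
  have hx : x ∈ ⋀[ℂ]^r V := (w z).2
  have hx0 : x ≠ 0 := fun h => hw z (ZeroMemClass.coe_eq_zero.mp h)
  obtain ⟨A, hAcard, hne⟩ := exists_compl_wedge_ne_zero b r x hx hx0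
  set L : List (Fin (r * m)) := Aᶜ.sort (· ≤ ·) with hLdef
  have hLlen : L.length = r * (m - 1) := by
    rw [hLdef, Finset.length_sort, Finset.card_compl, hAcard, Fintype.card_fin]
    have h1 : r ≤ r * m := Nat.le_mul_of_pos_right r hm
    rw [Nat.mul_sub, Nat.mul_one]
  -- block lengths
  have hblock : ∀ a : Fin m, (a : ℕ) ≠ 0 →
      ((L.drop (r * ((a : ℕ) - 1))).take r).length = r := by
    intro a ha
    rw [List.length_take, List.length_drop, hLlen]
    have h1 : (a : ℕ) ≤ m - 1 := by omega
    have : r * ((a : ℕ) - 1) + r = r * (a : ℕ) := by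
      have h3 : 1 ≤ (a : ℕ) := by omega
      rw [Nat.mul_sub, Nat.mul_one]
      have : r ≤ r * (a : ℕ) := Nat.le_mul_of_pos_right r (by omega)
      omega
    have h2 : r * (a : ℕ) ≤ r * (m - 1) := Nat.mul_le_mul_left r h1
    omega
  set t : Fin m → (⋀[ℂ]^r V : Submodule ℂ (ExteriorAlgebra ℂ V)) :=
    fun a => if h : (a : ℕ) = 0 then 0 else
      ⟨eList b ((L.drop (r * ((a : ℕ) - 1))).take r), by
        have := eList_mem b ((L.drop (r * ((a : ℕ) - 1))).take r)
        rwa [hblock a h] at this⟩ with htdef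
  refine ⟨m - 1, le_refl _, t, ?_⟩
  set S₀ : Finset (Fin m) := {z}ᶜ with hS₀
  have hS₀card : S₀.card = m - 1 := by
    rw [hS₀, Finset.card_compl, Finset.card_singleton, Fintype.card_fin]
  have hS₀mem : S₀ ∈ Finset.powersetCard (m - 1) (Finset.univ : Finset (Fin m)) :=
    Finset.mem_powersetCard_univ.mpr hS₀card
  rw [polarSum, Finset.sum_eq_single_of_mem S₀ hS₀mem]
  · -- the S₀ term is nonzero
    have hcompl : S₀ᶜ = {z} := by rw [hS₀, compl_compl]
    have hw0 : wedgeFinset (fun a => (w a : ExteriorAlgebra ℂ V)) S₀ᶜ = x := by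
      rw [hcompl, wedgeFinset, Finset.sort_singleton]
      simp [hxdef]
    -- identify the sorted list of S₀
    have hf : ∀ i : Fin (m - 1), (i : ℕ) + 1 < m := fun i => by omega
    set f : Fin (m - 1) → Fin m := fun i => ⟨(i : ℕ) + 1, hf i⟩ with hfdef
    have hsort : S₀.sort (· ≤ ·) = List.ofFn f := by
      apply List.Perm.eq_of_pairwise' (Finset.pairwise_sort _ _) ?_
        (List.perm_of_nodup_nodup_toFinset_eq (Finset.sort_nodup _ _)
          (List.nodup_ofFn.mpr (by intro i j hij; ext; simpa [hfdef] using hij)) ?_)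
      · rw [List.pairwise_ofFn]
        intro i j hij
        simp only [hfdef, Fin.mk_le_mk]
        omega
      · rw [Finset.sort_toFinset]
        ext a
        rw [List.mem_toFinset, List.mem_ofFn, hS₀, Finset.mem_compl,
          Finset.mem_singleton]
        constructor
        · intro ha
          have ha' : (a : ℕ) ≠ 0 := fun h => ha (by rw [hz]; exact Fin.ext h)
          refine ⟨⟨(a : ℕ) - 1, by omega⟩, ?_⟩
          rw [hfdef]
          exact Fin.ext (by simp; omega)
        · rintro ⟨i, rfl⟩
          intro hcon
          have : (f i : ℕ) = (z : ℕ) := congrArg Fin.val hcon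
          simp [hfdef, hz] at this
    have htS : wedgeFinset (fun a => (t a : ExteriorAlgebra ℂ V)) S₀ = eFin b Aᶜ := by
      rw [wedgeFinset, hsort, List.map_ofFn]
      have hteq : (fun a => (t a : ExteriorAlgebra ℂ V)) ∘ f
          = (eList b) ∘ (fun i : Fin (m - 1) => ((L.drop (r * (i : ℕ))).take r)) := by
        funext i
        simp only [Function.comp_apply, htdef, hfdef]
        rw [dif_neg (by simp)]
        simp
      rw [hteq, ← List.map_ofFn, ← eList_join, join_blocks r (m - 1) L hLlen]
      rfl
    rw [hw0, htS]
    intro hcon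
    rcases Int.units_eq_one_or (Equiv.Perm.sign (sigmaPerm S₀)) with hs | hs <;>
      rw [hs] at hcon <;> simp only [Units.val_one, Units.val_neg, one_smul, neg_smul,
        neg_eq_zero, one_zsmul, neg_zsmul] at hcon <;> exact hne hcon
  · -- all other terms vanish
    intro S hS hSne
    have h0S : z ∈ S := by
      by_contra h0
      refine hSne (Finset.eq_of_subset_of_card_le (fun a ha => ?_) ?_)
      · rw [hS₀, Finset.mem_compl, Finset.mem_singleton]
        rintro rfl; exact h0 ha
      · rw [hS₀card, Finset.mem_powersetCard_univ.mp hS]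
    have : wedgeFinset (fun a => (t a : ExteriorAlgebra ℂ V)) S = 0 := by
      apply List.prod_eq_zero
      refine List.mem_map.mpr ⟨z, (Finset.mem_sort _).mpr h0S, ?_⟩
      simp [htdef, hz]
    rw [this, mul_zero, smul_zero]
end
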